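/- arXiv:2109.08671 — 10 statements merged into one kernel-verified Lean document; each statement's English description precedes it below -/
import Mathlib

section
/- An exclusive allocation A of goods with copies is Pareto optimal with respect to additive valuations v_1,…,v_n if and only if its dual allocation A* is Pareto optimal with respect to the dual valuations v*_i = −v_i. -/
open Finset

variable {τ : Type*} [Fintype τ] [DecidableEq τ]

def IsAlloc (n : ℕ) (k : τ → ℕ) (A : Fin n → Finset τ) : Prop :=
  ∀ t, (Finset.univ.filter fun i => t ∈ A i).card = k t

def vOf (v : τ → ℝ) (S : Finset τ) : ℝ := ∑ t ∈ S, v t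

def dualAlloc {n : ℕ} (A : Fin n → Finset τ) : Fin n → Finset τ :=
  fun i => Finset.univ \ A i

def Dominates {n : ℕ} (v : Fin n → τ → ℝ) (B A : Fin n → Finset τ) : Prop :=
  (∀ i, vOf (v i) (A i) ≤ vOf (v i) (B i)) ∧ ∃ j, vOf (v j) (A j) < vOf (v j) (B j)

def ParetoOpt {n : ℕ} (k : τ → ℕ) (v : Fin n → τ → ℝ) (A : Fin n → Finset τ) : Prop :=
  ¬ ∃ B, IsAlloc n k B ∧ Dominates v B A

lemma dual_isAlloc {n : ℕ} {k : τ → ℕ} {A : Fin n → Finset τ} (hA : IsAlloc n k A) :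
    IsAlloc n (fun t => n - k t) (dualAlloc A) := by
  intro t
  have := hA t
  simp only [dualAlloc, mem_sdiff, mem_univ, true_and]
  rw [Finset.filter_not, Finset.card_sdiff_of_subset (Finset.filter_subset _ _), this,
    Finset.card_univ, Fintype.card_fin]

lemma vOf_neg_dual (v : τ → ℝ) (S : Finset τ) :
    vOf (fun t => -(v t)) (Finset.univ \ S) = vOf v S - vOf v Finset.univ := by
  unfold vOf
  rw [Finset.sum_sdiff_eq_sub (Finset.subset_univ S)]
  simp [Finset.sum_neg_distrib]
  ring

lemma dual_dual {n : ℕ} (A : Fin n → Finset τ) : dualAlloc (dualAlloc A) = A := by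
  funext i
  ext t; simp [dualAlloc]

lemma dom_dual {n : ℕ} (v : Fin n → τ → ℝ) (B A : Fin n → Finset τ)
    (h : Dominates v B A) :
    Dominates (fun i t => -(v i t)) (dualAlloc B) (dualAlloc A) := by
  obtain ⟨h1, j, h2⟩ := h
  constructor
  · intro i
    simp only [dualAlloc, vOf_neg_dual]
    linarith [h1 i]
  · exact ⟨j, by simp only [dualAlloc, vOf_neg_dual]; linarith⟩

lemma dom_dual' {n : ℕ} (v : Fin n → τ → ℝ) (B A : Fin n → Finset τ)
    (h : Dominates (fun i t => -(v i t)) B (dualAlloc A)) :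
    Dominates v (dualAlloc B) A := by
  have := dom_dual (fun i t => -(v i t)) B (dualAlloc A) h
  rw [dual_dual] at this
  simpa using this

/-- An exclusive allocation is Pareto optimal iff its dual
allocation is Pareto optimal for the dual (negated) valuations. -/
theorem pareto_dual {n : ℕ} {k : τ → ℕ} {v : Fin n → τ → ℝ} {A : Fin n → Finset τ}
    (hk : ∀ t, k t ≤ n) (hA : IsAlloc n k A) :
    ParetoOpt k v A ↔
      ParetoOpt (fun t => n - k t) (fun i t => -(v i t)) (dualAlloc A) := by
  constructor
  · rintro h ⟨B, hB, hdom⟩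
    exact h ⟨dualAlloc B, by
      have := dual_isAlloc hB
      convert this using 2 with t
      have := hk t
      omega, dom_dual' v B A hdom⟩
  · rintro h ⟨B, hB, hdom⟩
    exact h ⟨dualAlloc B, dual_isAlloc hB, dom_dual v B A hdom⟩
end

section
/- Duality meta-theorem for envy-based fairness: for any comparison criterion f, an exclusive allocation A is f_WC-fair with respect to valuations v if and only if its dual allocation A* is f^c_WC-fair with respect to the dual valuations −v. Here f_WC(v, B_I, B_U) = f(v, B_I \ B_U, B_U \ B_I) and f^c(v, B_I, B_U) = f(−v, B_U, B_I). -/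
open Finset

variable {τ : Type*} [Fintype τ] [DecidableEq τ]

def fWC (f : (τ → ℝ) → Finset τ → Finset τ → Prop) :
    (τ → ℝ) → Finset τ → Finset τ → Prop :=
  fun v BI BU => f v (BI \ BU) (BU \ BI)

def fComp (f : (τ → ℝ) → Finset τ → Finset τ → Prop) :
    (τ → ℝ) → Finset τ → Finset τ → Prop :=
  fun v BI BU => f (fun t => -(v t)) BU BI

def IsFair {n : ℕ} (f : (τ → ℝ) → Finset τ → Finset τ → Prop)
    (v : Fin n → τ → ℝ) (A : Fin n → Finset τ) : Prop :=
  ∀ i j, f (v i) (A i) (A j)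

/-- Duality meta-theorem for envy-based fairness: A is
f_WC-fair w.r.t. v iff the dual allocation is f^c_WC-fair w.r.t. -v. -/
theorem wc_duality {n : ℕ} (f : (τ → ℝ) → Finset τ → Finset τ → Prop)
    (v : Fin n → τ → ℝ) (A : Fin n → Finset τ) :
    IsFair (fWC f) v A ↔
      IsFair (fWC (fComp f)) (fun i t => -(v i t)) (dualAlloc A) := by
  have key : ∀ (X Y : Finset τ), (univ \ X) \ (univ \ Y) = Y \ X := by
    intro X Y; ext t; simp [and_comm]
  constructor
  · intro h i j
    simp only [fWC, fComp, dualAlloc, key, neg_neg]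
    exact h i j
  · intro h i j
    have := h i j
    simpa only [fWC, fComp, dualAlloc, key, neg_neg] using this
end

section
/- For an exclusive allocation of goods with copies and additive valuations, the allocation A is EFX_WC with respect to v if and only if the dual allocation A* (with A*_i = T \ A_i) is EFX_WC for chores with respect to −v. -/
open Finset

variable {τ : Type*} [Fintype τ] [DecidableEq τ]

def EFXwcGoods {n : ℕ} (v : Fin n → τ → ℝ) (A : Fin n → Finset τ) : Prop :=
  ∀ i j, ∀ g ∈ A j \ A i,
    vOf (v i) ((A j \ A i).erase g) ≤ vOf (v i) (A i \ A j)

def EFXwcChores {n : ℕ} (v : Fin n → τ → ℝ) (A : Fin n → Finset τ) : Prop :=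
  ∀ i j, ∀ c ∈ A i \ A j,
    vOf (v i) (A j \ A i) ≤ vOf (v i) ((A i \ A j).erase c)

/-- A is EFX_WC for goods w.r.t. v iff the dual allocation is
EFX_WC for chores w.r.t. -v. -/
theorem efxwc_dual {n : ℕ} (v : Fin n → τ → ℝ) (A : Fin n → Finset τ) :
    EFXwcGoods v A ↔ EFXwcChores (fun i t => -(v i t)) (dualAlloc A) := by
  have hd : ∀ i j : Fin n, dualAlloc A i \ dualAlloc A j = A j \ A i := by
    intro i j
    ext t
    simp [dualAlloc]
    tauto
  have hneg : ∀ (w : τ → ℝ) (S : Finset τ), vOf (fun t => -(w t)) S = -vOf w S := by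
    intro w S
    simp [vOf]
  constructor
  · intro h i j c hc
    rw [hd] at hc ⊢
    rw [hd, hneg, hneg, neg_le_neg_iff]
    exact h i j c hc
  · intro h i j g hg
    have := h i j g (by rwa [hd])
    rw [hd, hd, hneg, hneg, neg_le_neg_iff] at this
    exact this
end

section
/- For n ≥ 3 agents with identical additive valuations, n+1 goods where good g_w has value w for w ≤ n and value n² for w = n+1, and k copies of each good with n/2 < k < n, no exclusive EFX allocation exists; moreover no exclusive EFL allocation exists. -/
open Finset

variable {τ : Type*} [Fintype τ] [DecidableEq τ]

def EFX {n : ℕ} (v : Fin n → τ → ℝ) (A : Fin n → Finset τ) : Prop :=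
  ∀ i j, ∀ g ∈ A j, vOf (v i) ((A j).erase g) ≤ vOf (v i) (A i)

def EFL {n : ℕ} (v : Fin n → τ → ℝ) (A : Fin n → Finset τ) : Prop :=
  ∀ i j, (A j).card ≤ 1 ∨
    ∃ g ∈ A j, vOf (v i) ((A j).erase g) ≤ vOf (v i) (A i) ∧ v i g ≤ vOf (v i) (A i)

/-- With n ≥ 3 agents, identical valuations over n+1 goods
(good w has value w+1 for w < n, and value n² for w = n), and k copies of
each good with n/2 < k < n, no exclusive EFX allocation exists, and no
exclusive EFL allocation exists. -/
theorem no_efx_no_efl_with_copies {n k : ℕ} (hn : 3 ≤ n)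
    (hk1 : n < 2 * k) (hk2 : k < n)
    (v : Fin (n + 1) → ℝ)
    (hv : ∀ w : Fin (n + 1), v w = if (w : ℕ) = n then (n : ℝ) ^ 2 else ((w : ℕ) + 1 : ℝ)) :
    (¬ ∃ A : Fin n → Finset (Fin (n + 1)),
        IsAlloc n (fun _ => k) A ∧ EFX (fun _ => v) A) ∧
    (¬ ∃ A : Fin n → Finset (Fin (n + 1)),
        IsAlloc n (fun _ => k) A ∧ EFL (fun _ => v) A) := by
  have hnR : (3 : ℝ) ≤ (n : ℝ) := by exact_mod_cast hn
  set big : Fin (n + 1) := ⟨n, by omega⟩ with hbigdef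
  have hvbig : v big = (n : ℝ) ^ 2 := by rw [hv]; simp [hbigdef]
  have hvpos : ∀ t : Fin (n + 1), 0 < v t := by
    intro t; rw [hv]
    split
    · nlinarith
    · positivity
  -- ℕ Gauss sum
  have hNsum : (∑ i ∈ Finset.range n, (i + 1)) * 2 = (n + 1) * n := by
    have h := Finset.sum_range_id_mul_two (n + 1)
    rw [Finset.sum_range_succ'] at h
    simpa [Nat.mul_comm] using h
  -- value of the erase-big universe
  have huniv : vOf v (Finset.univ.erase big) = ∑ i ∈ Finset.range n, ((i : ℝ) + 1) := by
    unfold vOf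
    rw [Finset.sum_erase_eq_sub (Finset.mem_univ big)]
    have : big = Fin.last n := rfl
    rw [this, Fin.sum_univ_castSucc]
    rw [show v (Fin.last n) = (n : ℝ) ^ 2 from hvbig]
    have hterm : ∀ i : Fin n, v i.castSucc = (i : ℝ) + 1 := by
      intro i
      rw [hv]
      have : ((i.castSucc : Fin (n + 1)) : ℕ) = (i : ℕ) := Fin.coe_castSucc i
      rw [this, if_neg (by omega)]
    rw [Finset.sum_congr rfl (fun i _ => hterm i)]
    rw [Fin.sum_univ_eq_sum_range (fun i => ((i : ℝ) + 1))]
    ring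
  have hunivlt : vOf v (Finset.univ.erase big) < (n : ℝ) ^ 2 := by
    rw [huniv]
    have hc : (∑ i ∈ Finset.range n, ((i : ℝ) + 1)) * 2 = ((n : ℝ) + 1) * n := by
      exact_mod_cast hNsum
    nlinarith
  have hsmall : ∀ S : Finset (Fin (n + 1)), big ∉ S → vOf v S < (n : ℝ) ^ 2 := by
    intro S hS
    have hsub : S ⊆ Finset.univ.erase big :=
      Finset.subset_erase.mpr ⟨Finset.subset_univ S, hS⟩
    have := Finset.sum_le_sum_of_subset_of_nonneg hsub
      (fun t _ _ => (hvpos t).le)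
    calc vOf v S ≤ vOf v (Finset.univ.erase big) := this
      _ < (n : ℝ) ^ 2 := hunivlt
  -- key counting lemma
  have key : ∀ A : Fin n → Finset (Fin (n + 1)), IsAlloc n (fun _ => k) A →
      (∀ j, big ∈ A j → A j = {big}) → False := by
    intro A hA hsing
    have h0 : (0 : Fin (n + 1)) ≠ big := by
      intro h
      have h' : ((0 : Fin (n + 1)) : ℕ) = (big : ℕ) := congrArg Fin.val h
      rw [show ((0 : Fin (n + 1)) : ℕ) = 0 from rfl, show (big : ℕ) = n from rfl] at h'
      omega
    have hB : (Finset.univ.filter fun i => big ∈ A i).card = k := hA big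
    have hC : (Finset.univ.filter fun i => (0 : Fin (n + 1)) ∈ A i).card = k :=
      hA (0 : Fin (n + 1))
    have hdisj : Disjoint (Finset.univ.filter fun i => big ∈ A i)
        (Finset.univ.filter fun i => (0 : Fin (n + 1)) ∈ A i) := by
      rw [Finset.disjoint_left]
      intro i hi hi'
      simp only [Finset.mem_filter] at hi hi'
      have := hsing i hi.2
      rw [this, Finset.mem_singleton] at hi'
      exact h0 hi'.2
    have hcard := Finset.card_union_of_disjoint hdisj
    have hle : ((Finset.univ.filter fun i => big ∈ A i) ∪
        (Finset.univ.filter fun i => (0 : Fin (n + 1)) ∈ A i)).card ≤ n := by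
      calc _ ≤ (Finset.univ : Finset (Fin n)).card := Finset.card_le_card (Finset.subset_univ _)
        _ = n := by simp
    rw [hcard, hB, hC] at hle
    omega
  -- existence of an agent without big
  have hex : ∀ A : Fin n → Finset (Fin (n + 1)), IsAlloc n (fun _ => k) A →
      ∃ i, big ∉ A i := by
    intro A hA
    by_contra h
    push_neg at h
    have : (Finset.univ.filter fun i => big ∈ A i) = Finset.univ :=
      Finset.filter_true_of_mem (fun i _ => h i)
    have hB : (Finset.univ.filter fun i => big ∈ A i).card = k := hA big
    rw [this] at hB
    simp at hB
    omega
  -- value of erase containing big is large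
  have hbigin : ∀ (S : Finset (Fin (n + 1))), big ∈ S → (n : ℝ) ^ 2 ≤ vOf v S := by
    intro S hS
    have := Finset.single_le_sum (f := v) (fun t _ => (hvpos t).le) hS
    rwa [hvbig] at this
  have singleton_of : ∀ (S : Finset (Fin (n + 1))), big ∈ S → S.card ≤ 1 → S = {big} := by
    intro S hS hc
    have h1 : S.card = 1 := le_antisymm hc (Finset.card_pos.2 ⟨big, hS⟩)
    obtain ⟨a, ha⟩ := Finset.card_eq_one.1 h1
    rw [ha] at hS ⊢
    rw [Finset.mem_singleton] at hS
    rw [hS]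
  constructor
  · rintro ⟨A, hA, hEFX⟩
    obtain ⟨i0, hi0⟩ := hex A hA
    have hval : vOf v (A i0) < (n : ℝ) ^ 2 := hsmall _ hi0
    refine key A hA (fun j hbj => ?_)
    refine singleton_of _ hbj ?_
    by_contra hc
    push_neg at hc
    obtain ⟨g, hg, hgne⟩ := Finset.exists_mem_ne hc big
    have hbe : big ∈ (A j).erase g := Finset.mem_erase.2 ⟨fun h => hgne h.symm, hbj⟩
    have h1 := hEFX i0 j g hg
    have h2 := hbigin _ hbe
    simp only at h1
    linarith
  · rintro ⟨A, hA, hEFL⟩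
    obtain ⟨i0, hi0⟩ := hex A hA
    have hval : vOf v (A i0) < (n : ℝ) ^ 2 := hsmall _ hi0
    refine key A hA (fun j hbj => ?_)
    refine singleton_of _ hbj ?_
    rcases hEFL i0 j with h | ⟨g, hg, h1, h2⟩
    · exact h
    · exfalso
      by_cases hgb : g = big
      · have h2' : v g ≤ vOf v (A i0) := h2
        rw [hgb, hvbig] at h2'
        linarith
      · have hbe : big ∈ (A j).erase g := Finset.mem_erase.2 ⟨fun h => hgb h.symm, hbj⟩
        have h3 := hbigin _ hbe
        simp only at h1
        linarith
end

section
/- In an EFX_WC exclusive allocation A with additive valuations, for any agents α and i: (1) if |A_i \ A_α| = 2, then every good g ∈ A_i \ A_α satisfies v_α(g) ≤ v_α(A_α); (2) if |A_i \ A_α| ≥ 3, then v_α(A_i \ A_α) ≤ (3/2)·v_α(A_α). -/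
open Finset

variable {τ : Type*} [Fintype τ] [DecidableEq τ]

def EFXwc {n : ℕ} (v : Fin n → τ → ℝ) (A : Fin n → Finset τ) : Prop :=
  ∀ i j, ∀ g ∈ A j \ A i,
    vOf (v i) ((A j \ A i).erase g) ≤ vOf (v i) (A i \ A j)

/-- In an EFX_WC allocation with additive nonnegative
valuations: (1) if |A_i \ A_α| = 2 then each good there has value at most
v_α(A_α); (2) if |A_i \ A_α| ≥ 3 then v_α(A_i \ A_α) ≤ (3/2)·v_α(A_α). -/
theorem efxwc_bundle_bounds {n : ℕ} {k : τ → ℕ} {v : Fin n → τ → ℝ}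
    {A : Fin n → Finset τ} (hv : ∀ i t, 0 ≤ v i t)
    (hA : IsAlloc n k A) (hefx : EFXwc v A) (α i : Fin n) :
    ((A i \ A α).card = 2 → ∀ g ∈ A i \ A α, v α g ≤ vOf (v α) (A α)) ∧
    (3 ≤ (A i \ A α).card →
      vOf (v α) (A i \ A α) ≤ (3 / 2) * vOf (v α) (A α)) := by
  set S := A i \ A α with hS
  have hsub : ∀ g ∈ S, vOf (v α) (S.erase g) ≤ vOf (v α) (A α) := by
    intro g hg
    calc vOf (v α) (S.erase g) ≤ vOf (v α) (A α \ A i) := hefx α i g hg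
      _ ≤ vOf (v α) (A α) :=
        Finset.sum_le_sum_of_subset_of_nonneg Finset.sdiff_subset
          (fun t _ _ => hv α t)
  constructor
  · intro hcard g hg
    obtain ⟨a, ha, b, hb, hab⟩ := Finset.one_lt_card.mp (by omega : 1 < S.card)
    obtain ⟨h, hh, hne⟩ : ∃ h ∈ S, h ≠ g := by
      by_cases hag : a = g
      · exact ⟨b, hb, fun hbg => hab (hag.trans hbg.symm)⟩
      · exact ⟨a, ha, hag⟩
    have h1 : v α g ≤ vOf (v α) (S.erase h) :=
      Finset.single_le_sum (fun t _ => hv α t)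
        (Finset.mem_erase.mpr ⟨fun hgh => hne hgh.symm, hg⟩)
    exact h1.trans (hsub h hh)
  · intro hcard
    have hne : S.Nonempty := Finset.card_pos.mp (by omega)
    obtain ⟨g, hg, hmin⟩ := S.exists_min_image (v α) hne
    have h1 : (S.card : ℝ) * v α g ≤ vOf (v α) S := by
      have := Finset.card_nsmul_le_sum S (v α) (v α g) (fun b hb => hmin b hb)
      simpa [nsmul_eq_mul, vOf] using this
    have h3 : (3:ℝ) ≤ S.card := by exact_mod_cast hcard
    have h2 : 3 * v α g ≤ vOf (v α) S := by nlinarith [hv α g]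
    have h4 : vOf (v α) S = v α g + vOf (v α) (S.erase g) := by
      simp [vOf, (Finset.add_sum_erase S (v α) hg).symm]
    have h5 := hsub g hg
    linarith
end

section
/- For goods with copies and additive valuations, every EFX_WC exclusive allocation guarantees each agent at least a 4/11 fraction of her maximin share: v_i(A_i) ≥ (4/11)·MMS_i for every agent i. -/
open Finset

variable {τ : Type*} [Fintype τ] [DecidableEq τ]

noncomputable def MMS (n : ℕ) (k : τ → ℕ) (v : τ → ℝ) : ℝ :=
  ⨆ B : {B : Fin n → Finset τ // IsAlloc n k B}, ⨅ j, vOf v (B.1 j)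

/- ### Auxiliary lemmas -/

lemma vOf_nonneg {v : τ → ℝ} (hv : ∀ t, 0 ≤ v t) (S : Finset τ) : 0 ≤ vOf v S :=
  Finset.sum_nonneg fun t _ => hv t

lemma vOf_mono {v : τ → ℝ} (hv : ∀ t, 0 ≤ v t) {S T : Finset τ} (h : S ⊆ T) :
    vOf v S ≤ vOf v T :=
  Finset.sum_le_sum_of_subset_of_nonneg h fun t _ _ => hv t

/-- Double counting: summing any weight over all bundles of an exclusive
allocation gives the copy-weighted total. -/
lemma alloc_sum_swap {n : ℕ} {k : τ → ℕ} (C : Fin n → Finset τ)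
    (hC : IsAlloc n k C) (f : τ → ℝ) :
    ∑ j, ∑ t ∈ C j, f t = ∑ t, (k t : ℝ) * f t := by
  classical
  have h1 : ∀ j, ∑ t ∈ C j, f t = ∑ t, if t ∈ C j then f t else 0 := by
    intro j
    rw [Finset.sum_ite_mem, Finset.univ_inter]
  calc ∑ j, ∑ t ∈ C j, f t = ∑ j, ∑ t, if t ∈ C j then f t else 0 := by
        exact Finset.sum_congr rfl fun j _ => h1 j
    _ = ∑ t, ∑ j, if t ∈ C j then f t else 0 := Finset.sum_comm
    _ = ∑ t, (k t : ℝ) * f t := by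
        refine Finset.sum_congr rfl fun t _ => ?_
        rw [Finset.sum_ite, Finset.sum_const, Finset.sum_const_zero, add_zero,
          nsmul_eq_mul, hC t]

/-- Core combinatorial theorem: if `A` is an allocation that is EFX-with-copies
from agent `i`'s point of view, then any exclusive allocation `B` has some
bundle worth at most `11/4` times `i`'s own bundle. -/
lemma core_bound {n : ℕ} {k : τ → ℕ} {v : τ → ℝ}
    {A B : Fin n → Finset τ} (hv : ∀ t, 0 ≤ v t)
    (hA : IsAlloc n k A) (hB : IsAlloc n k B) (i : Fin n)
    (hefx : ∀ j, ∀ g ∈ A j \ A i,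
      vOf v ((A j \ A i).erase g) ≤ vOf v (A i \ A j)) :
    ∃ j, vOf v (B j) ≤ (11/4) * vOf v (A i) := by
  classical
  by_contra hcon
  push_neg at hcon
  set x := vOf v (A i) with hxdef
  have hx0 : 0 ≤ x := vOf_nonneg hv _
  have hAi_le : ∀ t ∈ A i, v t ≤ x := by
    intro t ht
    exact Finset.single_le_sum (fun s _ => hv s) ht
  -- EFX consequence
  have L1 : ∀ j, ∀ g ∈ A j \ A i, vOf v ((A j \ A i).erase g) ≤ x := by
    intro j g hg
    exact (hefx j g hg).trans (vOf_mono hv Finset.sdiff_subset)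
  -- price functions
  set ψ : τ → ℝ := fun t =>
    if t ∉ A i ∧ v t ≤ x then (if (3/4)*x < v t then x/2 else (2/3) * v t) else 0
    with hψdef
  set χ : τ → ℝ := fun t => if x < v t then 1 else 0 with hχdef
  have hψ0 : ∀ t, 0 ≤ ψ t := by
    intro t
    simp only [hψdef]
    split_ifs with h1 h2
    · linarith
    · have := hv t; linarith
    · exact le_refl 0
  have hχ0 : ∀ t, 0 ≤ χ t := by
    intro t
    simp only [hχdef]
    split_ifs <;> norm_num
  have hψAi : ∀ t ∈ A i, ψ t = 0 := by
    intro t ht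
    simp only [hψdef]
    rw [if_neg]
    intro h
    exact h.1 ht
  -- big-good singleton lemma
  have Lsing : ∀ j, ∀ b ∈ A j, x < v b → A j \ A i = {b} := by
    intro j b hb hxb
    have hbAi : b ∉ A i := fun h => absurd (hAi_le b h) (not_le.mpr hxb)
    have hbS : b ∈ A j \ A i := Finset.mem_sdiff.mpr ⟨hb, hbAi⟩
    refine Finset.eq_singleton_iff_unique_mem.mpr ⟨hbS, ?_⟩
    intro t ht
    by_contra hne
    have hb' : b ∈ (A j \ A i).erase t :=
      Finset.mem_erase.mpr ⟨fun h => hne h.symm, hbS⟩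
    have h1 : v b ≤ vOf v ((A j \ A i).erase t) :=
      Finset.single_le_sum (fun s _ => hv s) hb'
    have h2 := L1 j t ht
    linarith
  -- low-agent supply bound
  have Llow : ∀ j, (∀ t ∈ A j, v t ≤ x) → ∑ t ∈ A j \ A i, ψ t ≤ x := by
    intro j hjle
    set S := A j \ A i with hSdef
    have hS_le : ∀ t ∈ S, v t ≤ x := fun t ht => hjle t (Finset.mem_sdiff.mp ht).1
    have hS_er : ∀ g ∈ S, vOf v (S.erase g) ≤ x := fun g hg => L1 j g hg
    have hψS : ∀ t ∈ S, ψ t = if (3/4)*x < v t then x/2 else (2/3) * v t := by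
      intro t ht
      simp only [hψdef]
      rw [if_pos ⟨(Finset.mem_sdiff.mp ht).2, hS_le t ht⟩]
    set Hi := S.filter (fun t => (3/4)*x < v t) with hHidef
    have hHiS : Hi ⊆ S := Finset.filter_subset _ _
    have hψhigh : ∀ t ∈ Hi, ψ t = x/2 := by
      intro t ht
      rw [hψS t (hHiS ht), if_pos (Finset.mem_filter.mp ht).2]
    have hψlow : ∀ t ∈ S, t ∉ Hi → ψ t = (2/3) * v t ∧ v t ≤ (3/4)*x := by
      intro t ht hnot
      have hnh : ¬ ((3/4)*x < v t) := by
        intro h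
        exact hnot (Finset.mem_filter.mpr ⟨ht, h⟩)
      exact ⟨by rw [hψS t ht, if_neg hnh], le_of_not_gt hnh⟩
    rcases Nat.lt_or_ge Hi.card 2 with hc | hc
    · have hc' : Hi.card = 0 ∨ Hi.card = 1 := by omega
      rcases hc' with hc0 | hc1
      · -- no high goods
        have hHie : Hi = ∅ := Finset.card_eq_zero.mp hc0
        have hSlow : ∀ t ∈ S, ψ t = (2/3) * v t ∧ v t ≤ (3/4)*x := by
          intro t ht
          exact hψlow t ht (by rw [hHie]; exact Finset.notMem_empty t)
        have hsum : ∑ t ∈ S, ψ t = (2/3) * vOf v S := by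
          rw [vOf, Finset.mul_sum]
          exact Finset.sum_congr rfl fun t ht => (hSlow t ht).1
        have hvS : vOf v S ≤ (3/2)*x := by
          rcases Nat.lt_or_ge S.card 3 with hs | hs
          · have : vOf v S ≤ S.card • ((3/4)*x) :=
              Finset.sum_le_card_nsmul S v _ (fun t ht => (hSlow t ht).2)
            have h2 : (S.card : ℝ) * ((3/4)*x) ≤ 2 * ((3/4)*x) := by
              have : (S.card : ℝ) ≤ 2 := by exact_mod_cast Nat.lt_succ_iff.mp hs
              nlinarith
            rw [nsmul_eq_mul] at this
            linarith
          · have hne : S.Nonempty := Finset.card_pos.mp (by omega)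
            obtain ⟨m, hm, hmin⟩ := S.exists_min_image v hne
            have h1 : vOf v (S.erase m) ≤ x := hS_er m hm
            have hcard : 2 ≤ (S.erase m).card := by
              rw [Finset.card_erase_of_mem hm]; omega
            have h2 : (S.erase m).card • v m ≤ vOf v (S.erase m) :=
              Finset.card_nsmul_le_sum _ _ _
                (fun t ht => hmin t (Finset.mem_of_mem_erase ht))
            have h2' : 2 * v m ≤ vOf v (S.erase m) := by
              rw [nsmul_eq_mul] at h2
              have : (2:ℝ) * v m ≤ ((S.erase m).card : ℝ) * v m := by
                have hc2 : (2:ℝ) ≤ ((S.erase m).card : ℝ) := by exact_mod_cast hcard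
                nlinarith [hv m]
              linarith
            have h3 : vOf v S = vOf v (S.erase m) + v m :=
              (Finset.sum_erase_add S v hm).symm
            linarith
        linarith
      · -- exactly one high good
        obtain ⟨a, hHia⟩ := Finset.card_eq_one.mp hc1
        have haS : a ∈ S := hHiS (by rw [hHia]; exact Finset.mem_singleton_self a)
        have hva : (3/4)*x < v a := (Finset.mem_filter.mp (by
          rw [hHia]; exact Finset.mem_singleton_self a : a ∈ Hi)).2
        have hsplit : ∑ t ∈ S, ψ t = ∑ t ∈ S.erase a, ψ t + ψ a :=
          (Finset.sum_erase_add S ψ haS).symm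
        have hψa : ψ a = x/2 := hψhigh a (by rw [hHia]; exact Finset.mem_singleton_self a)
        have herlow : ∀ t ∈ S.erase a, ψ t = (2/3) * v t ∧ v t ≤ (3/4)*x := by
          intro t ht
          refine hψlow t (Finset.mem_of_mem_erase ht) ?_
          intro hmem
          rw [hHia] at hmem
          exact (Finset.mem_erase.mp ht).1 (Finset.mem_singleton.mp hmem)
        have hsum2 : ∑ t ∈ S.erase a, ψ t = (2/3) * vOf v (S.erase a) := by
          rw [vOf, Finset.mul_sum]
          exact Finset.sum_congr rfl fun t ht => (herlow t ht).1
        have hσ : vOf v (S.erase a) ≤ (3/4)*x := by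
          rcases Nat.lt_or_ge (S.erase a).card 2 with hs | hs
          · have hs' : (S.erase a).card = 0 ∨ (S.erase a).card = 1 := by omega
            rcases hs' with h0 | h1
            · rw [Finset.card_eq_zero.mp h0]
              simp [vOf]
              linarith
            · obtain ⟨t, hts⟩ := Finset.card_eq_one.mp h1
              rw [hts]
              have : t ∈ S.erase a := by rw [hts]; exact Finset.mem_singleton_self t
              have := (herlow t this).2
              simpa [vOf] using this
          · have hne : (S.erase a).Nonempty := Finset.card_pos.mp (by omega)
            obtain ⟨m, hm, hmin⟩ := (S.erase a).exists_min_image v hne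
            have hmS : m ∈ S := Finset.mem_of_mem_erase hm
            have h1 : vOf v (S.erase m) ≤ x := hS_er m hmS
            have h2 : (S.erase a).card • v m ≤ vOf v (S.erase a) :=
              Finset.card_nsmul_le_sum _ _ _ hmin
            have h2' : 2 * v m ≤ vOf v (S.erase a) := by
              rw [nsmul_eq_mul] at h2
              have hc2 : (2:ℝ) ≤ ((S.erase a).card : ℝ) := by exact_mod_cast hs
              nlinarith [hv m]
            have hma : m ≠ a := (Finset.mem_erase.mp hm).1
            have h3 : vOf v S = vOf v (S.erase m) + v m :=
              (Finset.sum_erase_add S v hmS).symm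
            have h4 : vOf v S = vOf v (S.erase a) + v a :=
              (Finset.sum_erase_add S v haS).symm
            linarith
        rw [hsplit, hsum2, hψa]
        linarith
    · -- at least two high goods
      obtain ⟨a, ha, b, hb, hab⟩ := Finset.one_lt_card.mp hc
      have haS : a ∈ S := hHiS ha
      have hbS : b ∈ S := hHiS hb
      have hva : (3/4)*x < v a := (Finset.mem_filter.mp ha).2
      have hvb : (3/4)*x < v b := (Finset.mem_filter.mp hb).2
      have hSab : S = {a, b} := by
        apply Finset.Subset.antisymm
        · intro t ht
          by_contra htm
          simp only [Finset.mem_insert, Finset.mem_singleton] at htm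
          push_neg at htm
          have hat : a ∈ S.erase t :=
            Finset.mem_erase.mpr ⟨fun h => htm.1 h.symm, haS⟩
          have hbt : b ∈ S.erase t :=
            Finset.mem_erase.mpr ⟨fun h => htm.2 h.symm, hbS⟩
          have hsub : ({a, b} : Finset τ) ⊆ S.erase t := by
            intro s hs
            rcases Finset.mem_insert.mp hs with h | h
            · exact h ▸ hat
            · exact (Finset.mem_singleton.mp h) ▸ hbt
          have h1 : v a + v b ≤ vOf v (S.erase t) := by
            have := vOf_mono hv hsub
            rwa [vOf, Finset.sum_pair hab] at this
          have h2 := hS_er t ht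
          linarith
        · intro s hs
          rcases Finset.mem_insert.mp hs with h | h
          · exact h ▸ haS
          · exact (Finset.mem_singleton.mp h) ▸ hbS
      rw [hSdef] at hSab ⊢
      rw [hSab, Finset.sum_pair hab,
        hψhigh a ha, hψhigh b hb]
      linarith
  -- bundle demand bound
  have Lbun : ∀ j, (∀ t ∈ B j, v t ≤ x) → x ≤ ∑ t ∈ B j, ψ t := by
    intro j hjle
    set T := B j \ A i with hTdef
    have hsumT : ∑ t ∈ T, ψ t = ∑ t ∈ B j, ψ t := by
      apply Finset.sum_subset Finset.sdiff_subset
      intro t htB htT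
      have htAi : t ∈ A i := by
        by_contra h
        exact htT (Finset.mem_sdiff.mpr ⟨htB, h⟩)
      exact hψAi t htAi
    have hsplit : vOf v (B j) = vOf v (B j ∩ A i) + vOf v T := by
      rw [vOf, vOf, vOf, ← Finset.sum_inter_add_sum_sdiff (B j) (A i) v]
    have hint : vOf v (B j ∩ A i) ≤ x :=
      vOf_mono hv Finset.inter_subset_right
    have hvT : (7/4)*x < vOf v T := by
      have := hcon j
      linarith
    have hT_le : ∀ t ∈ T, v t ≤ x := fun t ht => hjle t (Finset.mem_sdiff.mp ht).1
    have hψT : ∀ t ∈ T, ψ t = if (3/4)*x < v t then x/2 else (2/3) * v t := by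
      intro t ht
      simp only [hψdef]
      rw [if_pos ⟨(Finset.mem_sdiff.mp ht).2, hT_le t ht⟩]
    set HiT := T.filter (fun t => (3/4)*x < v t) with hHiTdef
    have hHiT : HiT ⊆ T := Finset.filter_subset _ _
    rw [← hsumT]
    rcases Nat.lt_or_ge HiT.card 2 with hc | hc
    · have hc' : HiT.card = 0 ∨ HiT.card = 1 := by omega
      rcases hc' with hc0 | hc1
      · -- no high: pure mass
        have hHie : HiT = ∅ := Finset.card_eq_zero.mp hc0
        have hsum : ∑ t ∈ T, ψ t = (2/3) * vOf v T := by
          rw [vOf, Finset.mul_sum]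
          refine Finset.sum_congr rfl fun t ht => ?_
          rw [hψT t ht, if_neg]
          intro h
          have : t ∈ HiT := Finset.mem_filter.mpr ⟨ht, h⟩
          rw [hHie] at this
          exact Finset.notMem_empty t this
        rw [hsum]
        linarith
      · obtain ⟨a, hHia⟩ := Finset.card_eq_one.mp hc1
        have haT : a ∈ T := hHiT (by rw [hHia]; exact Finset.mem_singleton_self a)
        have hva : v a ≤ x := hT_le a haT
        have hsplit2 : ∑ t ∈ T, ψ t = ∑ t ∈ T.erase a, ψ t + ψ a :=
          (Finset.sum_erase_add T ψ haT).symm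
        have hψa : ψ a = x/2 := by
          rw [hψT a haT, if_pos]
          exact (Finset.mem_filter.mp (by
            rw [hHia]; exact Finset.mem_singleton_self a : a ∈ HiT)).2
        have hsum2 : ∑ t ∈ T.erase a, ψ t = (2/3) * vOf v (T.erase a) := by
          rw [vOf, Finset.mul_sum]
          refine Finset.sum_congr rfl fun t ht => ?_
          rw [hψT t (Finset.mem_of_mem_erase ht), if_neg]
          intro h
          have : t ∈ HiT := Finset.mem_filter.mpr ⟨Finset.mem_of_mem_erase ht, h⟩
          rw [hHia] at this
          exact (Finset.mem_erase.mp ht).1 (Finset.mem_singleton.mp this)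
        have h3 : vOf v T = vOf v (T.erase a) + v a :=
          (Finset.sum_erase_add T v haT).symm
        rw [hsplit2, hsum2, hψa]
        linarith
    · obtain ⟨a, ha, b, hb, hab⟩ := Finset.one_lt_card.mp hc
      have hsub : ({a, b} : Finset τ) ⊆ T := by
        intro s hs
        rcases Finset.mem_insert.mp hs with h | h
        · exact h ▸ hHiT ha
        · exact (Finset.mem_singleton.mp h) ▸ hHiT hb
      have h1 : ψ a + ψ b ≤ ∑ t ∈ T, ψ t := by
        have := Finset.sum_le_sum_of_subset_of_nonneg hsub
          (fun t _ _ => hψ0 t)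
        rwa [Finset.sum_pair hab] at this
      have hψa : ψ a = x/2 := by
        rw [hψT a (hHiT ha), if_pos (Finset.mem_filter.mp ha).2]
      have hψb : ψ b = x/2 := by
        rw [hψT b (hHiT hb), if_pos (Finset.mem_filter.mp hb).2]
      rw [hψa, hψb] at h1
      linarith
  -- per-agent classified facts
  have hAgent : ∀ j, j ≠ i →
      (∑ t ∈ A j, ψ t) + x * (∑ t ∈ A j, χ t) ≤ x ∧ (∑ t ∈ A j, χ t) ≤ 1 := by
    intro j hji
    have hsumSψ : ∑ t ∈ A j \ A i, ψ t = ∑ t ∈ A j, ψ t := by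
      apply Finset.sum_subset Finset.sdiff_subset
      intro t htB htT
      have htAi : t ∈ A i := by
        by_contra h
        exact htT (Finset.mem_sdiff.mpr ⟨htB, h⟩)
      exact hψAi t htAi
    have hsumSχ : ∑ t ∈ A j \ A i, χ t = ∑ t ∈ A j, χ t := by
      apply Finset.sum_subset Finset.sdiff_subset
      intro t htB htT
      have htAi : t ∈ A i := by
        by_contra h
        exact htT (Finset.mem_sdiff.mpr ⟨htB, h⟩)
      simp only [hχdef]
      rw [if_neg (not_lt.mpr (hAi_le t htAi))]
    by_cases hbig : ∃ b ∈ A j, x < v b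
    · obtain ⟨b, hb, hxb⟩ := hbig
      have hSb := Lsing j b hb hxb
      have hψsum : ∑ t ∈ A j, ψ t = 0 := by
        rw [← hsumSψ, hSb, Finset.sum_singleton]
        simp only [hψdef]
        rw [if_neg]
        intro h
        exact absurd h.2 (not_le.mpr hxb)
      have hχsum : ∑ t ∈ A j, χ t = 1 := by
        rw [← hsumSχ, hSb, Finset.sum_singleton]
        simp only [hχdef]
        rw [if_pos hxb]
      rw [hψsum, hχsum]
      constructor
      · linarith
      · linarith
    · push_neg at hbig
      have hχsum : ∑ t ∈ A j, χ t = 0 := by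
        apply Finset.sum_eq_zero
        intro t ht
        simp only [hχdef]
        rw [if_neg (not_lt.mpr (hbig t ht))]
      have hψsum : ∑ t ∈ A j, ψ t ≤ x := by
        rw [← hsumSψ]
        exact Llow j hbig
      rw [hχsum]
      constructor
      · linarith
      · linarith
  -- per-bundle fact
  have hBund : ∀ j, x ≤ (∑ t ∈ B j, ψ t) + x * (∑ t ∈ B j, χ t) := by
    intro j
    by_cases hbig : ∃ b ∈ B j, x < v b
    · obtain ⟨b, hb, hxb⟩ := hbig
      have h1 : (1:ℝ) ≤ ∑ t ∈ B j, χ t := by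
        have := Finset.single_le_sum (fun t _ => hχ0 t) hb
        have hχb : χ b = 1 := by simp only [hχdef]; rw [if_pos hxb]
        linarith [hχb ▸ this]
      have h2 : 0 ≤ ∑ t ∈ B j, ψ t := Finset.sum_nonneg fun t _ => hψ0 t
      nlinarith
    · push_neg at hbig
      have h1 := Lbun j hbig
      have h3 : 0 ≤ ∑ t ∈ B j, χ t := Finset.sum_nonneg fun t _ => hχ0 t
      nlinarith
  -- conservation
  have hswapψ : ∑ j, ∑ t ∈ A j, ψ t = ∑ j, ∑ t ∈ B j, ψ t := by
    rw [alloc_sum_swap A hA ψ, alloc_sum_swap B hB ψ]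
  have hswapχ : ∑ j, ∑ t ∈ A j, χ t = ∑ j, ∑ t ∈ B j, χ t := by
    rw [alloc_sum_swap A hA χ, alloc_sum_swap B hB χ]
  -- n ≥ 1
  have hn1 : 1 ≤ n := i.pos
  -- agent-side total
  have hAi_ψ : ∑ t ∈ A i, ψ t = 0 := Finset.sum_eq_zero fun t ht => hψAi t ht
  have hAi_χ : ∑ t ∈ A i, χ t = 0 := by
    apply Finset.sum_eq_zero
    intro t ht
    simp only [hχdef]
    rw [if_neg (not_lt.mpr (hAi_le t ht))]
  have hAgentTot :
      ∑ j, ((∑ t ∈ A j, ψ t) + x * (∑ t ∈ A j, χ t)) ≤ ((n:ℝ) - 1) * x := by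
    rw [← Finset.sum_erase_add _ _ (Finset.mem_univ i)]
    have hterm : (∑ t ∈ A i, ψ t) + x * (∑ t ∈ A i, χ t) = 0 := by
      rw [hAi_ψ, hAi_χ]; ring
    rw [hterm, add_zero]
    have hbound : ∀ j ∈ Finset.univ.erase i,
        (∑ t ∈ A j, ψ t) + x * (∑ t ∈ A j, χ t) ≤ x := by
      intro j hj
      exact (hAgent j (Finset.mem_erase.mp hj).1).1
    have := Finset.sum_le_card_nsmul _ _ x hbound
    rw [Finset.card_erase_of_mem (Finset.mem_univ i), Finset.card_univ,
      Fintype.card_fin, nsmul_eq_mul] at this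
    have hcast : ((n - 1 : ℕ) : ℝ) = (n:ℝ) - 1 := by
      rw [Nat.cast_sub hn1]; norm_num
    rw [hcast] at this
    exact this
  have hBundTot :
      (n:ℝ) * x ≤ ∑ j, ((∑ t ∈ B j, ψ t) + x * (∑ t ∈ B j, χ t)) := by
    have := Finset.sum_le_sum (fun j (_ : j ∈ Finset.univ) => hBund j)
    rw [Finset.sum_const, Finset.card_univ, Fintype.card_fin, nsmul_eq_mul] at this
    exact this
  have hEq : ∑ j, ((∑ t ∈ B j, ψ t) + x * (∑ t ∈ B j, χ t))
      = ∑ j, ((∑ t ∈ A j, ψ t) + x * (∑ t ∈ A j, χ t)) := by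
    rw [Finset.sum_add_distrib, Finset.sum_add_distrib, ← Finset.mul_sum,
      ← Finset.mul_sum, hswapψ, hswapχ]
  have hxle : x ≤ 0 := by
    have h := hBundTot.trans (hEq.le.trans hAgentTot)
    nlinarith
  have hxeq : x = 0 := le_antisymm hxle hx0
  -- final contradiction at x = 0
  have hBpos : ∀ j, (1:ℝ) ≤ ∑ t ∈ B j, χ t := by
    intro j
    have hj := hcon j
    rw [hxeq] at hj
    have : ∃ t ∈ B j, 0 < v t := by
      by_contra h
      push_neg at h
      have : vOf v (B j) ≤ 0 := Finset.sum_nonpos h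
      linarith
    obtain ⟨t, ht, hvt⟩ := this
    have hχt : χ t = 1 := by
      simp only [hχdef]
      rw [if_pos (by rw [hxeq]; exact hvt)]
    have := Finset.single_le_sum (fun s _ => hχ0 s) ht
    linarith [hχt ▸ this]
  have hBχtot : (n:ℝ) ≤ ∑ j, ∑ t ∈ B j, χ t := by
    have := Finset.sum_le_sum (fun j (_ : j ∈ Finset.univ) => hBpos j)
    rw [Finset.sum_const, Finset.card_univ, Fintype.card_fin, nsmul_eq_mul,
      mul_one] at this
    exact this
  have hAχtot : ∑ j, ∑ t ∈ A j, χ t ≤ (n:ℝ) - 1 := by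
    rw [← Finset.sum_erase_add _ _ (Finset.mem_univ i), hAi_χ, add_zero]
    have hbound : ∀ j ∈ Finset.univ.erase i, ∑ t ∈ A j, χ t ≤ 1 := by
      intro j hj
      exact (hAgent j (Finset.mem_erase.mp hj).1).2
    have := Finset.sum_le_card_nsmul _ _ 1 hbound
    rw [Finset.card_erase_of_mem (Finset.mem_univ i), Finset.card_univ,
      Fintype.card_fin, nsmul_eq_mul, mul_one] at this
    have hcast : ((n - 1 : ℕ) : ℝ) = (n:ℝ) - 1 := by
      rw [Nat.cast_sub hn1]; norm_num
    rw [hcast] at this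
    exact this
  rw [hswapχ] at hAχtot
  linarith

/-- Every EFX_WC exclusive allocation of goods with copies
guarantees each agent at least 4/11 of her maximin share. -/
theorem efxwc_mms_bound {n : ℕ} {k : τ → ℕ} {v : Fin n → τ → ℝ}
    {A : Fin n → Finset τ} (hv : ∀ i t, 0 ≤ v i t)
    (hA : IsAlloc n k A) (hefx : EFXwc v A) :
    ∀ i, (4 / 11) * MMS n k (v i) ≤ vOf (v i) (A i) := by
  intro i
  have hx0 : 0 ≤ vOf (v i) (A i) := vOf_nonneg (hv i) _
  have key : MMS n k (v i) ≤ (11/4) * vOf (v i) (A i) := by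
    apply Real.iSup_le
    · rintro ⟨B, hB⟩
      obtain ⟨j, hj⟩ := core_bound (hv i) hA hB i (fun j g hg => hefx i j g hg)
      have hinf : (⨅ j', vOf (v i) (B j')) ≤ vOf (v i) (B j) := by
        apply ciInf_le
        exact (Set.finite_range _).bddBelow
      exact hinf.trans hj
    · linarith
  linarith
end

section
/- There exists an instance of goods with copies (2ℓ+1 agents for ℓ ≥ 3) and an EFL_WC exclusive allocation in which some agent receives value 1 while her maximin share is at least 3 − 2/ℓ; hence EFL_WC cannot guarantee more than a 1/3 fraction of MMS. -/
open Finset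

variable {τ : Type*} [Fintype τ] [DecidableEq τ]

def EFLwc {n : ℕ} (v : Fin n → τ → ℝ) (A : Fin n → Finset τ) : Prop :=
  ∀ i j, (A j \ A i).card ≤ 1 ∨
    ∃ g ∈ A j \ A i,
      vOf (v i) ((A j \ A i).erase g) ≤ vOf (v i) (A i \ A j) ∧
      v i g ≤ vOf (v i) (A i \ A j)

/-- Goods: H, x, x', y_1..y_ℓ, z_1..z_ℓ. -/
abbrev Gd (ℓ : ℕ) : Type := Unit ⊕ Unit ⊕ Unit ⊕ Fin ℓ ⊕ Fin ℓ

/-- Number of copies: H has ℓ, x has ℓ+1, x' has ℓ, each y_i and z_i has 1. -/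
def copies (ℓ : ℕ) : Gd ℓ → ℕ :=
  Sum.elim (fun _ => ℓ) (Sum.elim (fun _ => ℓ + 1)
    (Sum.elim (fun _ => ℓ) (Sum.elim (fun _ => 1) (fun _ => 1))))

/-- Distinguished agent'"'"'s valuation: H ↦ 3, x ↦ 1, x' ↦ 1, y_i ↦ 1 - 2/ℓ, z_i ↦ 2/ℓ. -/
noncomputable def vspec (ℓ : ℕ) : Gd ℓ → ℝ :=
  Sum.elim (fun _ => 3) (Sum.elim (fun _ => 1)
    (Sum.elim (fun _ => 1) (Sum.elim (fun _ => 1 - 2 / ℓ) (fun _ => 2 / ℓ))))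

/-- The last agent is distinguished; all other agents value every good as 1. -/
noncomputable def vEx (ℓ : ℕ) : Fin (2 * ℓ + 1) → Gd ℓ → ℝ :=
  fun i g => if (i : ℕ) = 2 * ℓ then vspec ℓ g else 1

/-! ### Auxiliary definitions -/

abbrev gH (ℓ : ℕ) : Gd ℓ := Sum.inl ()
abbrev gx (ℓ : ℕ) : Gd ℓ := Sum.inr (Sum.inl ())
abbrev gx' (ℓ : ℕ) : Gd ℓ := Sum.inr (Sum.inr (Sum.inl ()))
abbrev gy {ℓ : ℕ} (j : Fin ℓ) : Gd ℓ := Sum.inr (Sum.inr (Sum.inr (Sum.inl j)))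
abbrev gz {ℓ : ℕ} (j : Fin ℓ) : Gd ℓ := Sum.inr (Sum.inr (Sum.inr (Sum.inr j)))

/-- the EFL_WC allocation -/
def Aex (ℓ : ℕ) (i : Fin (2 * ℓ + 1)) : Finset (Gd ℓ) :=
  if h1 : (i : ℕ) < ℓ then {gH ℓ, gx ℓ}
  else if h2 : (i : ℕ) < 2 * ℓ then
    {gx' ℓ, gy ⟨(i : ℕ) - ℓ, by omega⟩, gz ⟨(i : ℕ) - ℓ, by omega⟩}
  else {gx ℓ}

/-- the MMS witness partition -/
def Bex (ℓ : ℕ) (j : Fin (2 * ℓ + 1)) : Finset (Gd ℓ) :=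
  if h1 : (j : ℕ) < ℓ then {gH ℓ}
  else if h2 : (j : ℕ) < 2 * ℓ then
    {gx ℓ, gx' ℓ, gy ⟨(j : ℕ) - ℓ, by omega⟩}
  else insert (gx ℓ) (Finset.univ.image (gz (ℓ := ℓ)))

lemma Aex_lo {ℓ : ℕ} {i : Fin (2 * ℓ + 1)} (h : (i : ℕ) < ℓ) :
    Aex ℓ i = {gH ℓ, gx ℓ} := by simp [Aex, h]

lemma Aex_mid {ℓ : ℕ} {i : Fin (2 * ℓ + 1)} (h1 : ℓ ≤ (i : ℕ)) (h2 : (i : ℕ) < 2 * ℓ) :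
    ∃ a : Fin ℓ, (i : ℕ) = ℓ + a ∧ Aex ℓ i = {gx' ℓ, gy a, gz a} := by
  refine ⟨⟨(i : ℕ) - ℓ, by omega⟩, by simp; omega, ?_⟩
  simp [Aex, h2, Nat.not_lt.mpr h1]

lemma Aex_hi {ℓ : ℕ} {i : Fin (2 * ℓ + 1)} (h : (i : ℕ) = 2 * ℓ) :
    Aex ℓ i = {gx ℓ} := by
  have h1 : ¬ (i : ℕ) < ℓ := by omega
  have h2 : ¬ (i : ℕ) < 2 * ℓ := by omega
  simp [Aex, h1, h2]

lemma Bex_lo {ℓ : ℕ} {j : Fin (2 * ℓ + 1)} (h : (j : ℕ) < ℓ) :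
    Bex ℓ j = {gH ℓ} := by simp [Bex, h]

lemma Bex_mid {ℓ : ℕ} {j : Fin (2 * ℓ + 1)} (h1 : ℓ ≤ (j : ℕ)) (h2 : (j : ℕ) < 2 * ℓ) :
    ∃ a : Fin ℓ, (j : ℕ) = ℓ + a ∧ Bex ℓ j = {gx ℓ, gx' ℓ, gy a} := by
  refine ⟨⟨(j : ℕ) - ℓ, by omega⟩, by simp; omega, ?_⟩
  simp [Bex, h2, Nat.not_lt.mpr h1]

lemma Bex_hi {ℓ : ℕ} {j : Fin (2 * ℓ + 1)} (h : (j : ℕ) = 2 * ℓ) :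
    Bex ℓ j = insert (gx ℓ) (Finset.univ.image (gz (ℓ := ℓ))) := by
  have h1 : ¬ (j : ℕ) < ℓ := by omega
  have h2 : ¬ (j : ℕ) < 2 * ℓ := by omega
  simp [Bex, h1, h2]

/-! ### Counting lemmas -/

lemma card_filter_fin (n : ℕ) (p : ℕ → Prop) [DecidablePred p] :
    (univ.filter fun i : Fin n => p i.val).card = ((Finset.Iio n).filter p).card := by
  rw [← Fin.map_valEmbedding_univ, Finset.filter_map, Finset.card_map]
  rfl

lemma count_lemma (n : ℕ) (p : ℕ → Prop) [DecidablePred p] (s : Finset ℕ)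
    (hs : ∀ m, m ∈ s ↔ m < n ∧ p m) :
    (univ.filter fun i : Fin n => p i.val).card = s.card := by
  rw [card_filter_fin]
  congr 1
  ext m
  rw [Finset.mem_filter, Finset.mem_Iio, hs]

/-! ### Membership characterizations -/

lemma mem_Aex_H {ℓ : ℕ} (i : Fin (2 * ℓ + 1)) (u : Unit) :
    Sum.inl u ∈ Aex ℓ i ↔ (i : ℕ) < ℓ := by
  have hi := i.isLt
  rcases Nat.lt_or_ge (i : ℕ) ℓ with h | h
  · rw [Aex_lo h]; simp [h]
  · rcases Nat.lt_or_ge (i : ℕ) (2 * ℓ) with h2 | h2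
    · obtain ⟨a, ha, hA⟩ := Aex_mid h h2
      rw [hA]; simp; omega
    · rw [Aex_hi (by omega)]; simp; omega

lemma mem_Aex_x {ℓ : ℕ} (i : Fin (2 * ℓ + 1)) (u : Unit) :
    Sum.inr (Sum.inl u) ∈ Aex ℓ i ↔ ((i : ℕ) < ℓ ∨ (i : ℕ) = 2 * ℓ) := by
  have hi := i.isLt
  rcases Nat.lt_or_ge (i : ℕ) ℓ with h | h
  · rw [Aex_lo h]; simp; omega
  · rcases Nat.lt_or_ge (i : ℕ) (2 * ℓ) with h2 | h2
    · obtain ⟨a, ha, hA⟩ := Aex_mid h h2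
      rw [hA]; simp; omega
    · rw [Aex_hi (by omega)]; simp; omega

lemma mem_Aex_x' {ℓ : ℕ} (i : Fin (2 * ℓ + 1)) (u : Unit) :
    Sum.inr (Sum.inr (Sum.inl u)) ∈ Aex ℓ i ↔ (ℓ ≤ (i : ℕ) ∧ (i : ℕ) < 2 * ℓ) := by
  have hi := i.isLt
  rcases Nat.lt_or_ge (i : ℕ) ℓ with h | h
  · rw [Aex_lo h]; simp; omega
  · rcases Nat.lt_or_ge (i : ℕ) (2 * ℓ) with h2 | h2
    · obtain ⟨a, ha, hA⟩ := Aex_mid h h2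
      rw [hA]; simp; omega
    · rw [Aex_hi (by omega)]; simp; omega

lemma mem_Aex_y {ℓ : ℕ} (i : Fin (2 * ℓ + 1)) (j : Fin ℓ) :
    gy j ∈ Aex ℓ i ↔ (i : ℕ) = ℓ + j := by
  have hi := i.isLt
  have hj := j.isLt
  rcases Nat.lt_or_ge (i : ℕ) ℓ with h | h
  · rw [Aex_lo h]; simp; omega
  · rcases Nat.lt_or_ge (i : ℕ) (2 * ℓ) with h2 | h2
    · obtain ⟨a, ha, hA⟩ := Aex_mid h h2
      have ha' := a.isLt
      rw [hA]; simp [Fin.ext_iff]; omega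
    · rw [Aex_hi (by omega)]; simp; omega

lemma mem_Aex_z {ℓ : ℕ} (i : Fin (2 * ℓ + 1)) (j : Fin ℓ) :
    gz j ∈ Aex ℓ i ↔ (i : ℕ) = ℓ + j := by
  have hi := i.isLt
  have hj := j.isLt
  rcases Nat.lt_or_ge (i : ℕ) ℓ with h | h
  · rw [Aex_lo h]; simp; omega
  · rcases Nat.lt_or_ge (i : ℕ) (2 * ℓ) with h2 | h2
    · obtain ⟨a, ha, hA⟩ := Aex_mid h h2
      have ha' := a.isLt
      rw [hA]; simp [Fin.ext_iff]; omega
    · rw [Aex_hi (by omega)]; simp; omega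

lemma mem_Bex_H {ℓ : ℕ} (j : Fin (2 * ℓ + 1)) (u : Unit) :
    Sum.inl u ∈ Bex ℓ j ↔ (j : ℕ) < ℓ := by
  have hj := j.isLt
  rcases Nat.lt_or_ge (j : ℕ) ℓ with h | h
  · rw [Bex_lo h]; simp [h]
  · rcases Nat.lt_or_ge (j : ℕ) (2 * ℓ) with h2 | h2
    · obtain ⟨a, ha, hB⟩ := Bex_mid h h2
      rw [hB]; simp; omega
    · rw [Bex_hi (by omega)]; simp; omega

lemma mem_Bex_x {ℓ : ℕ} (j : Fin (2 * ℓ + 1)) (u : Unit) :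
    Sum.inr (Sum.inl u) ∈ Bex ℓ j ↔ ℓ ≤ (j : ℕ) := by
  have hj := j.isLt
  rcases Nat.lt_or_ge (j : ℕ) ℓ with h | h
  · rw [Bex_lo h]; simp; omega
  · rcases Nat.lt_or_ge (j : ℕ) (2 * ℓ) with h2 | h2
    · obtain ⟨a, ha, hB⟩ := Bex_mid h h2
      rw [hB]; simp; omega
    · rw [Bex_hi (by omega)]; simp; omega

lemma mem_Bex_x' {ℓ : ℕ} (j : Fin (2 * ℓ + 1)) (u : Unit) :
    Sum.inr (Sum.inr (Sum.inl u)) ∈ Bex ℓ j ↔ (ℓ ≤ (j : ℕ) ∧ (j : ℕ) < 2 * ℓ) := by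
  have hj := j.isLt
  rcases Nat.lt_or_ge (j : ℕ) ℓ with h | h
  · rw [Bex_lo h]; simp; omega
  · rcases Nat.lt_or_ge (j : ℕ) (2 * ℓ) with h2 | h2
    · obtain ⟨a, ha, hB⟩ := Bex_mid h h2
      rw [hB]; simp; omega
    · rw [Bex_hi (by omega)]; simp; omega

lemma mem_Bex_y {ℓ : ℕ} (j : Fin (2 * ℓ + 1)) (k : Fin ℓ) :
    gy k ∈ Bex ℓ j ↔ (j : ℕ) = ℓ + k := by
  have hj := j.isLt
  have hk := k.isLt
  rcases Nat.lt_or_ge (j : ℕ) ℓ with h | h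
  · rw [Bex_lo h]; simp; omega
  · rcases Nat.lt_or_ge (j : ℕ) (2 * ℓ) with h2 | h2
    · obtain ⟨a, ha, hB⟩ := Bex_mid h h2
      have ha' := a.isLt
      rw [hB]; simp [Fin.ext_iff]; omega
    · rw [Bex_hi (by omega)]; simp; omega

lemma mem_Bex_z {ℓ : ℕ} (j : Fin (2 * ℓ + 1)) (k : Fin ℓ) :
    gz k ∈ Bex ℓ j ↔ (j : ℕ) = 2 * ℓ := by
  have hj := j.isLt
  rcases Nat.lt_or_ge (j : ℕ) ℓ with h | h
  · rw [Bex_lo h]; simp; omega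
  · rcases Nat.lt_or_ge (j : ℕ) (2 * ℓ) with h2 | h2
    · obtain ⟨a, ha, hB⟩ := Bex_mid h h2
      rw [hB]; simp; omega
    · rw [Bex_hi (by omega)]; simp; omega

/-! ### Allocation properties -/

lemma Aex_isAlloc (ℓ : ℕ) : IsAlloc (2 * ℓ + 1) (copies ℓ) (Aex ℓ) := by
  intro t
  rcases t with u | u | u | j | j
  · rw [filter_congr fun i _ => mem_Aex_H i u,
      count_lemma _ (fun m => m < ℓ) (Finset.Iio ℓ) (fun m => by simp only [Finset.mem_insert, Finset.mem_Iio, Finset.mem_Ico, Finset.mem_Icc, Finset.mem_singleton]; omega)]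
    simp [copies]
  · rw [filter_congr fun i _ => mem_Aex_x i u,
      count_lemma _ (fun m => m < ℓ ∨ m = 2 * ℓ)
        (insert (2 * ℓ) (Finset.Iio ℓ)) (fun m => by simp only [Finset.mem_insert, Finset.mem_Iio, Finset.mem_Ico, Finset.mem_Icc, Finset.mem_singleton]; omega)]
    rw [Finset.card_insert_of_notMem (by simp; omega)]
    simp [copies]
  · rw [filter_congr fun i _ => mem_Aex_x' i u,
      count_lemma _ (fun m => ℓ ≤ m ∧ m < 2 * ℓ) (Finset.Ico ℓ (2 * ℓ)) (fun m => by simp only [Finset.mem_insert, Finset.mem_Iio, Finset.mem_Ico, Finset.mem_Icc, Finset.mem_singleton]; omega)]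
    simp [copies]; omega
  · have hj := j.isLt
    rw [filter_congr fun i _ => mem_Aex_y i j,
      count_lemma _ (fun m => m = ℓ + (j : ℕ)) {ℓ + (j : ℕ)} (fun m => by simp only [Finset.mem_insert, Finset.mem_Iio, Finset.mem_Ico, Finset.mem_Icc, Finset.mem_singleton]; omega)]
    simp [copies]
  · have hj := j.isLt
    rw [filter_congr fun i _ => mem_Aex_z i j,
      count_lemma _ (fun m => m = ℓ + (j : ℕ)) {ℓ + (j : ℕ)} (fun m => by simp only [Finset.mem_insert, Finset.mem_Iio, Finset.mem_Ico, Finset.mem_Icc, Finset.mem_singleton]; omega)]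
    simp [copies]

lemma Bex_isAlloc (ℓ : ℕ) : IsAlloc (2 * ℓ + 1) (copies ℓ) (Bex ℓ) := by
  intro t
  rcases t with u | u | u | k | k
  · rw [filter_congr fun j _ => mem_Bex_H j u,
      count_lemma _ (fun m => m < ℓ) (Finset.Iio ℓ) (fun m => by simp only [Finset.mem_insert, Finset.mem_Iio, Finset.mem_Ico, Finset.mem_Icc, Finset.mem_singleton]; omega)]
    simp [copies]
  · rw [filter_congr fun j _ => mem_Bex_x j u,
      count_lemma _ (fun m => ℓ ≤ m) (Finset.Icc ℓ (2 * ℓ)) (fun m => by simp only [Finset.mem_insert, Finset.mem_Iio, Finset.mem_Ico, Finset.mem_Icc, Finset.mem_singleton]; omega)]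
    simp [copies]; omega
  · rw [filter_congr fun j _ => mem_Bex_x' j u,
      count_lemma _ (fun m => ℓ ≤ m ∧ m < 2 * ℓ) (Finset.Ico ℓ (2 * ℓ)) (fun m => by simp only [Finset.mem_insert, Finset.mem_Iio, Finset.mem_Ico, Finset.mem_Icc, Finset.mem_singleton]; omega)]
    simp [copies]; omega
  · have hk := k.isLt
    rw [filter_congr fun j _ => mem_Bex_y j k,
      count_lemma _ (fun m => m = ℓ + (k : ℕ)) {ℓ + (k : ℕ)} (fun m => by simp only [Finset.mem_insert, Finset.mem_Iio, Finset.mem_Ico, Finset.mem_Icc, Finset.mem_singleton]; omega)]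
    simp [copies]
  · rw [filter_congr fun j _ => mem_Bex_z j k,
      count_lemma _ (fun m => m = 2 * ℓ) {2 * ℓ} (fun m => by simp only [Finset.mem_insert, Finset.mem_Iio, Finset.mem_Ico, Finset.mem_Icc, Finset.mem_singleton]; omega)]
    simp [copies]

/-! ### Set difference computations -/

section diffs
variable {ℓ : ℕ} (a b : Fin ℓ)

lemma sd1 : ({gx' ℓ, gy a, gz a} : Finset (Gd ℓ)) \ {gH ℓ, gx ℓ} = {gx' ℓ, gy a, gz a} := by
  ext g; rcases g with ⟨⟩ | ⟨⟩ | ⟨⟩ | j | j <;> simp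

lemma sd2 : ({gH ℓ, gx ℓ} : Finset (Gd ℓ)) \ {gx' ℓ, gy a, gz a} = {gH ℓ, gx ℓ} := by
  ext g; rcases g with ⟨⟩ | ⟨⟩ | ⟨⟩ | j | j <;> simp

lemma sd3 : ({gx ℓ} : Finset (Gd ℓ)) \ {gH ℓ, gx ℓ} = ∅ := by
  ext g; rcases g with ⟨⟩ | ⟨⟩ | ⟨⟩ | j | j <;> simp

lemma sd4 : ({gH ℓ, gx ℓ} : Finset (Gd ℓ)) \ {gx ℓ} = {gH ℓ} := by
  ext g; rcases g with ⟨⟩ | ⟨⟩ | ⟨⟩ | j | j <;> simp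

lemma sd5 (hab : a ≠ b) :
    ({gx' ℓ, gy a, gz a} : Finset (Gd ℓ)) \ {gx' ℓ, gy b, gz b} = {gy a, gz a} := by
  ext g; rcases g with ⟨⟩ | ⟨⟩ | ⟨⟩ | j | j <;> simp <;>
    rintro rfl <;> simp [hab]

lemma sd6 : ({gx' ℓ, gy a, gz a} : Finset (Gd ℓ)) \ {gx ℓ} = {gx' ℓ, gy a, gz a} := by
  ext g; rcases g with ⟨⟩ | ⟨⟩ | ⟨⟩ | j | j <;> simp

lemma sd7 : ({gx ℓ} : Finset (Gd ℓ)) \ {gx' ℓ, gy a, gz a} = {gx ℓ} := by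
  ext g; rcases g with ⟨⟩ | ⟨⟩ | ⟨⟩ | j | j <;> simp

end diffs

/-! ### valuation helpers -/

lemma vOf_ones {τ : Type*} [DecidableEq τ] {v : τ → ℝ} (hv : ∀ g, v g = 1)
    (S : Finset τ) : vOf v S = S.card := by
  simp [vOf, hv]

lemma vEx_ones {ℓ : ℕ} {i : Fin (2 * ℓ + 1)} (h : (i : ℕ) ≠ 2 * ℓ) (g : Gd ℓ) :
    vEx ℓ i g = 1 := if_neg h

lemma vEx_last {ℓ : ℕ} {i : Fin (2 * ℓ + 1)} (h : (i : ℕ) = 2 * ℓ) :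
    vEx ℓ i = vspec ℓ := funext fun g => if_pos h

/-! ### EFL_WC -/

lemma Aex_eflwc (ℓ : ℕ) (hℓ : 3 ≤ ℓ) : EFLwc (vEx ℓ) (Aex ℓ) := by
  intro i j
  have hi := i.isLt
  have hj := j.isLt
  rcases Nat.lt_or_ge (i : ℕ) ℓ with hiℓ | hiℓ
  · -- i is a low agent, unit valuation
    have hv : ∀ g, vEx ℓ i g = 1 := vEx_ones (by omega)
    rw [Aex_lo hiℓ]
    rcases Nat.lt_or_ge (j : ℕ) ℓ with hjℓ | hjℓ
    · left; rw [Aex_lo hjℓ, sdiff_self]; simp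
    · rcases Nat.lt_or_ge (j : ℕ) (2 * ℓ) with hj2 | hj2
      · obtain ⟨a, ha, hA⟩ := Aex_mid hjℓ hj2
        rw [hA, sd1, sd2]
        right
        refine ⟨gx' ℓ, by simp, ?_, ?_⟩
        · rw [Finset.erase_insert (by simp), vOf_ones hv, vOf_ones hv,
            Finset.card_pair (by simp), Finset.card_pair (by simp)]
        · rw [hv, vOf_ones hv, Finset.card_pair (by simp)]; norm_num
      · left
        rw [Aex_hi (by omega), sd3]; simp
  · rcases Nat.lt_or_ge (i : ℕ) (2 * ℓ) with hi2 | hi2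
    · -- i is a middle agent, unit valuation
      have hv : ∀ g, vEx ℓ i g = 1 := vEx_ones (by omega)
      obtain ⟨a, ha, hA⟩ := Aex_mid hiℓ hi2
      rw [hA]
      rcases Nat.lt_or_ge (j : ℕ) ℓ with hjℓ | hjℓ
      · rw [Aex_lo hjℓ, sd2, sd1]
        right
        refine ⟨gH ℓ, by simp, ?_, ?_⟩
        · rw [Finset.erase_insert (by simp), vOf_ones hv, vOf_ones hv,
            Finset.card_singleton]
          norm_num [Finset.card_insert_of_notMem, Finset.card_pair]
        · rw [hv, vOf_ones hv]
          norm_num [Finset.card_insert_of_notMem, Finset.card_pair]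
      · rcases Nat.lt_or_ge (j : ℕ) (2 * ℓ) with hj2 | hj2
        · obtain ⟨b, hb, hB⟩ := Aex_mid hjℓ hj2
          rw [hB]
          by_cases hab : b = a
          · left; rw [hab, sdiff_self]; simp
          · right
            rw [sd5 b a hab, sd5 a b (Ne.symm hab)]
            refine ⟨gy b, by simp, ?_, ?_⟩
            · rw [Finset.erase_insert (by simp), vOf_ones hv, vOf_ones hv,
                Finset.card_singleton, Finset.card_pair (by simp)]
              norm_num
            · rw [hv, vOf_ones hv, Finset.card_pair (by simp)]; norm_num
        · left
          rw [Aex_hi (by omega), sd7]; simp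
    · -- i is the distinguished agent
      have hi3 : (i : ℕ) = 2 * ℓ := by omega
      have hv : vEx ℓ i = vspec ℓ := vEx_last hi3
      rw [Aex_hi hi3, hv]
      rcases Nat.lt_or_ge (j : ℕ) ℓ with hjℓ | hjℓ
      · left; rw [Aex_lo hjℓ, sd4]; simp
      · rcases Nat.lt_or_ge (j : ℕ) (2 * ℓ) with hj2 | hj2
        · obtain ⟨a, ha, hA⟩ := Aex_mid hjℓ hj2
          rw [hA, sd6, sd7]
          right
          refine ⟨gx' ℓ, by simp, ?_, ?_⟩
          · rw [Finset.erase_insert (by simp)]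
            rw [vOf, vOf, Finset.sum_pair (by simp), Finset.sum_singleton]
            simp [vspec]
          · rw [vOf, Finset.sum_singleton]
            simp [vspec]
        · left
          rw [Aex_hi (by omega), sdiff_self]; simp

/-! ### MMS lower bound -/

lemma vspec_nonneg {ℓ : ℕ} (hℓ : 3 ≤ ℓ) (t : Gd ℓ) : 0 ≤ vspec ℓ t := by
  have h1 : (3 : ℝ) ≤ (ℓ : ℝ) := by exact_mod_cast hℓ
  have h0 : (0 : ℝ) < (ℓ : ℝ) := by linarith
  have h2 : 2 / (ℓ : ℝ) ≤ 1 := by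
    rw [div_le_one h0]; linarith
  have h3 : 0 ≤ 2 / (ℓ : ℝ) := by positivity
  rcases t with ⟨⟩ | ⟨⟩ | ⟨⟩ | j | j <;> simp [vspec] <;> linarith

lemma Bex_low (ℓ : ℕ) (hℓ : 3 ≤ ℓ) (j : Fin (2 * ℓ + 1)) :
    3 - 2 / (ℓ : ℝ) ≤ vOf (vspec ℓ) (Bex ℓ j) := by
  have h0 : (0 : ℝ) < (ℓ : ℝ) := by
    have : (0 : ℕ) < ℓ := by omega
    exact_mod_cast this
  have h3 : 0 ≤ 2 / (ℓ : ℝ) := by positivity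
  have hj := j.isLt
  rcases Nat.lt_or_ge (j : ℕ) ℓ with h | h
  · rw [Bex_lo h, vOf, Finset.sum_singleton]
    simp only [vspec, Sum.elim_inl]
    linarith
  · rcases Nat.lt_or_ge (j : ℕ) (2 * ℓ) with h2 | h2
    · obtain ⟨a, ha, hB⟩ := Bex_mid h h2
      rw [hB, vOf, Finset.sum_insert (by simp), Finset.sum_pair (by simp)]
      simp only [vspec, Sum.elim_inl, Sum.elim_inr]
      linarith
    · rw [Bex_hi (by omega), vOf, Finset.sum_insert (by simp),
        Finset.sum_image (fun a _ b _ h => by simpa using h)]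
      have hz : ∑ k : Fin ℓ, vspec ℓ (gz k) = 2 := by
        have hval : ∀ k : Fin ℓ, vspec ℓ (gz k) = 2 / (ℓ : ℝ) := fun k => rfl
        rw [Finset.sum_congr rfl fun k _ => hval k, Finset.sum_const, Finset.card_univ,
          Fintype.card_fin, nsmul_eq_mul]
        field_simp
      rw [hz]
      simp only [vspec, Sum.elim_inl, Sum.elim_inr]
      linarith

/-- For every ℓ ≥ 3 there is an EFL_WC exclusive allocation of
this instance in which some agent gets value 1 while her maximin share is at
least 3 - 2/ℓ; hence EFL_WC guarantees no more than 1/3 of MMS. -/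
theorem eflwc_third_mms_tight (ℓ : ℕ) (hℓ : 3 ≤ ℓ) :
    ∃ A : Fin (2 * ℓ + 1) → Finset (Gd ℓ),
      IsAlloc (2 * ℓ + 1) (copies ℓ) A ∧ EFLwc (vEx ℓ) A ∧
      ∃ i, vOf (vEx ℓ i) (A i) = 1 ∧
        3 - 2 / ℓ ≤ MMS (2 * ℓ + 1) (copies ℓ) (vEx ℓ i) := by
  refine ⟨Aex ℓ, Aex_isAlloc ℓ, Aex_eflwc ℓ hℓ, ⟨2 * ℓ, by omega⟩, ?_, ?_⟩
  · have h : ((⟨2 * ℓ, by omega⟩ : Fin (2 * ℓ + 1)) : ℕ) = 2 * ℓ := rfl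
    rw [Aex_hi h, vEx_last h, vOf, Finset.sum_singleton]
    simp [vspec]
  · have h : ((⟨2 * ℓ, by omega⟩ : Fin (2 * ℓ + 1)) : ℕ) = 2 * ℓ := rfl
    rw [vEx_last h, MMS]
    have hbdd : BddAbove (Set.range fun B : {B : Fin (2 * ℓ + 1) → Finset (Gd ℓ) //
        IsAlloc (2 * ℓ + 1) (copies ℓ) B} => ⨅ j, vOf (vspec ℓ) (B.1 j)) := by
      refine ⟨∑ t : Gd ℓ, vspec ℓ t, ?_⟩
      rintro r ⟨B, rfl⟩
      refine le_trans (ciInf_le (Set.finite_range _).bddBelow ⟨0, by omega⟩) ?_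
      exact Finset.sum_le_sum_of_subset_of_nonneg (Finset.subset_univ _)
        (fun t _ _ => vspec_nonneg hℓ t)
    exact le_ciSup_of_le hbdd ⟨Bex ℓ, Bex_isAlloc ℓ⟩ (le_ciInf (Bex_low ℓ hℓ))
end

section
/- For n agents with identical additive valuations where goods L_1,…,L_n each have value 1 and goods H_1,…,H_{n−1} each have value n (one copy each), the allocation giving agent θ the bundle {H_θ, L_θ} for θ ≤ n−1 and agent n the bundle {L_n} is EF1_WC, yet agent n's value is 1 while her maximin share is n; hence EF1_WC guarantees no more than a 1/n fraction of MMS. -/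
open Finset

variable {τ : Type*} [Fintype τ] [DecidableEq τ]

def EF1wc {n : ℕ} (v : Fin n → τ → ℝ) (A : Fin n → Finset τ) : Prop :=
  ∀ i j, A j \ A i = ∅ ∨
    ∃ g ∈ A j \ A i, vOf (v i) ((A j \ A i).erase g) ≤ vOf (v i) (A i \ A j)

lemma alloc_sum {n : ℕ} {B : Fin n → Finset τ} (hB : IsAlloc n (fun _ => 1) B)
    (v : τ → ℝ) : ∑ j, vOf v (B j) = ∑ t, v t := by
  unfold vOf
  have h1 : ∀ j, ∑ t ∈ B j, v t = ∑ t ∈ univ, if t ∈ B j then v t else 0 := by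
    intro j; rw [Finset.sum_ite_mem]; simp
  simp_rw [h1]
  rw [Finset.sum_comm]
  refine Finset.sum_congr rfl fun t _ => ?_
  rw [Finset.sum_ite, Finset.sum_const_zero, add_zero, Finset.sum_const, hB t, one_smul]

lemma sum_v (n : ℕ) (hn : 0 < n) :
    ∑ t : Fin n ⊕ Fin (n - 1), (Sum.elim (fun _ => (1:ℝ)) fun _ => (n:ℝ)) t
      = (n : ℝ) * n := by
  rw [Fintype.sum_sum_type]
  simp only [Sum.elim_inl, Sum.elim_inr, Finset.sum_const, Finset.card_univ,
    Fintype.card_fin, nsmul_eq_mul, mul_one]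
  have h : ((n - 1 : ℕ) : ℝ) = (n : ℝ) - 1 := by
    rw [Nat.cast_sub hn]; simp
  rw [h]; ring

lemma alloc_min_le {n : ℕ} (hn : 0 < n)
    {B : Fin n → Finset (Fin n ⊕ Fin (n - 1))}
    (hB : IsAlloc n (fun _ => 1) B) :
    ⨅ j, vOf (Sum.elim (fun _ => (1:ℝ)) fun _ => (n:ℝ)) (B j) ≤ n := by
  haveI : Nonempty (Fin n) := ⟨⟨0, hn⟩⟩
  set v0 : Fin n ⊕ Fin (n - 1) → ℝ := Sum.elim (fun _ => (1:ℝ)) fun _ => (n:ℝ)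
  have hle : ∀ j, (⨅ j, vOf v0 (B j)) ≤ vOf v0 (B j) :=
    fun j => ciInf_le (Finite.bddBelow_range _) j
  have hsum : (n : ℝ) * (⨅ j, vOf v0 (B j)) ≤ ∑ j, vOf v0 (B j) := by
    calc (n : ℝ) * (⨅ j, vOf v0 (B j)) = ∑ _j : Fin n, (⨅ j, vOf v0 (B j)) := by
          rw [Finset.sum_const]; simp [nsmul_eq_mul]
    _ ≤ ∑ j, vOf v0 (B j) := Finset.sum_le_sum fun j _ => hle j
  rw [alloc_sum hB, sum_v n hn] at hsum
  have hnpos : (0:ℝ) < n := by exact_mod_cast hn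
  nlinarith [hsum]

/-- With goods L_1..L_n of value 1 and H_1..H_{n-1} of value n
(one copy each, identical valuations), the allocation giving agent θ < n-1
the bundle {H_θ, L_θ} and the last agent {L_n} is EF1_WC, yet the last
agent'"'"'s value is 1 while her maximin share is n. -/
theorem ef1wc_mms_tight (n : ℕ) (hn : 0 < n)
    (v : Fin n ⊕ Fin (n - 1) → ℝ)
    (hv : v = Sum.elim (fun _ => (1 : ℝ)) (fun _ => (n : ℝ)))
    (A : Fin n → Finset (Fin n ⊕ Fin (n - 1)))
    (hAdef : A = fun i =>
      insert (Sum.inl i : Fin n ⊕ Fin (n - 1))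
        (if h : (i : ℕ) < n - 1
          then ({Sum.inr ⟨(i : ℕ), h⟩} : Finset (Fin n ⊕ Fin (n - 1)))
          else ∅)) :
    IsAlloc n (fun _ => 1) A ∧ EF1wc (fun _ => v) A ∧
    vOf v (A ⟨n - 1, by omega⟩) = 1 ∧
    MMS n (fun _ => 1) v = n := by
  haveI : Nonempty (Fin n) := ⟨⟨0, hn⟩⟩
  -- membership characterization
  have hmem : ∀ (x : Fin n ⊕ Fin (n - 1)) (i : Fin n),
      x ∈ A i ↔ (x = Sum.inl i ∨ ∃ h : (i : ℕ) < n - 1, x = Sum.inr ⟨(i : ℕ), h⟩) := by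
    intro x i
    subst hAdef
    by_cases h : (i : ℕ) < n - 1 <;> simp [h]
  -- IsAlloc for A
  have hAlloc : IsAlloc n (fun _ => 1) A := by
    intro t
    simp only
    rw [Finset.card_eq_one]
    rcases t with a | b
    · refine ⟨a, ?_⟩
      ext i
      simp only [Finset.mem_filter, Finset.mem_univ, true_and, Finset.mem_singleton, hmem]
      constructor
      · rintro (h | ⟨h, habs⟩)
        · exact (Sum.inl.injEq _ _ ▸ h : a = i).symm ▸ rfl
        · exact absurd habs (by simp)
      · rintro rfl; left; rfl
    · have hb : (b : ℕ) < n := lt_of_lt_of_le b.2 (Nat.sub_le n 1)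
      refine ⟨⟨(b : ℕ), hb⟩, ?_⟩
      ext i
      simp only [Finset.mem_filter, Finset.mem_univ, true_and, Finset.mem_singleton, hmem]
      constructor
      · rintro (h | ⟨h, heq⟩)
        · exact absurd h (by simp)
        · have : (b : ℕ) = (i : ℕ) := by
            have := Sum.inr.injEq (α := Fin n) b ⟨(i : ℕ), h⟩ ▸ heq
            simpa [Fin.ext_iff] using this
          exact Fin.ext this.symm
      · rintro rfl
        right
        exact ⟨b.2, by simp⟩
  -- disjointness
  have hdisj : ∀ i j : Fin n, i ≠ j → Disjoint (A i) (A j) := by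
    intro i j hij
    rw [Finset.disjoint_left]
    intro x hxi hxj
    rw [hmem] at hxi hxj
    rcases hxi with h1 | ⟨hi, h1⟩ <;> rcases hxj with h2 | ⟨hj, h2⟩
    · exact hij (Sum.inl_injective (h1 ▸ h2))
    · rw [h1] at h2; exact Sum.inl_ne_inr h2
    · rw [h1] at h2; exact Sum.inr_ne_inl h2
    · rw [h1] at h2
      have := Sum.inr_injective h2
      exact hij (Fin.ext (by simpa [Fin.ext_iff] using congrArg Fin.val this))
  -- bundle values
  have hvA : ∀ i : Fin n, vOf v (A i) = if (i : ℕ) < n - 1 then (1 : ℝ) + n else 1 := by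
    intro i
    subst hAdef hv
    by_cases h : (i : ℕ) < n - 1
    · simp [vOf, h, Finset.sum_insert]
    · simp [vOf, h]
  have hvA1 : ∀ i : Fin n, (1 : ℝ) ≤ vOf v (A i) := by
    intro i
    rw [hvA i]
    split
    · have : (0:ℝ) ≤ n := Nat.cast_nonneg n
      linarith
    · rfl
  -- EF1wc
  have hEF1 : EF1wc (fun _ => v) A := by
    intro i j
    by_cases hij : j = i
    · left; rw [hij, Finset.sdiff_self]
    · right
      have hd1 : A j \ A i = A j := by
        rw [Finset.sdiff_eq_self_iff_disjoint]
        exact hdisj j i hij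
      have hd2 : A i \ A j = A i := by
        rw [Finset.sdiff_eq_self_iff_disjoint]
        exact hdisj i j (fun h => hij h.symm)
      rw [hd1, hd2]
      by_cases h : (j : ℕ) < n - 1
      · refine ⟨Sum.inr ⟨(j : ℕ), h⟩, ?_, ?_⟩
        · rw [hmem]; right; exact ⟨h, rfl⟩
        · have herase : (A j).erase (Sum.inr ⟨(j : ℕ), h⟩)
              = {Sum.inl j} := by
            subst hAdef
            simp only [h, dif_pos]
            ext x
            simp only [Finset.mem_erase, Finset.mem_insert, Finset.mem_singleton]
            constructor
            · rintro ⟨hne, h1 | h1⟩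
              · exact h1
              · exact absurd h1 hne
            · rintro rfl; exact ⟨by simp, Or.inl rfl⟩
          rw [herase]
          have : vOf v {Sum.inl j} = 1 := by subst hv; simp [vOf]
          rw [this]
          exact hvA1 i
      · refine ⟨Sum.inl j, ?_, ?_⟩
        · rw [hmem]; left; rfl
        · have herase : (A j).erase (Sum.inl j) = ∅ := by
            subst hAdef
            simp [h]
          rw [herase]
          have h0 : vOf v (∅ : Finset (Fin n ⊕ Fin (n - 1))) = 0 := by simp [vOf]
          rw [h0]
          linarith [hvA1 i]
  -- value of last agent
  have hlast : vOf v (A ⟨n - 1, by omega⟩) = 1 := by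
    rw [hvA]
    simp
  -- MMS
  subst hv
  set v0 : Fin n ⊕ Fin (n - 1) → ℝ := Sum.elim (fun _ => (1:ℝ)) fun _ => (n:ℝ) with hv0
  -- the good allocation
  set B0 : Fin n → Finset (Fin n ⊕ Fin (n - 1)) := fun j =>
    if h : (j : ℕ) < n - 1 then {Sum.inr ⟨(j : ℕ), h⟩} else univ.image Sum.inl with hB0def
  have hB0 : IsAlloc n (fun _ => 1) B0 := by
    intro t
    simp only
    rw [Finset.card_eq_one]
    rcases t with a | b
    · refine ⟨⟨n - 1, by omega⟩, ?_⟩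
      ext i
      simp only [Finset.mem_filter, Finset.mem_univ, true_and, Finset.mem_singleton, hB0def]
      by_cases h : (i : ℕ) < n - 1
      · simp [h, Fin.ext_iff]
        omega
      · simp [h, Fin.ext_iff]
        omega
    · have hb : (b : ℕ) < n := lt_of_lt_of_le b.2 (Nat.sub_le n 1)
      refine ⟨⟨(b : ℕ), hb⟩, ?_⟩
      ext i
      simp only [Finset.mem_filter, Finset.mem_univ, true_and, Finset.mem_singleton, hB0def]
      by_cases h : (i : ℕ) < n - 1
      · simp [h, Fin.ext_iff]
        omega
      · simp [h, Fin.ext_iff]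
        omega
  have hB0val : ∀ j, vOf v0 (B0 j) = n := by
    intro j
    by_cases h : (j : ℕ) < n - 1
    · simp [hB0def, h, vOf, hv0]
    · simp only [hB0def, h, dif_neg, not_false_iff]
      rw [vOf, Finset.sum_image (fun a _ b _ h => Sum.inl_injective h)]
      simp [hv0]
  have hinf0 : (⨅ j, vOf v0 (B0 j)) = n := by
    simp_rw [hB0val]
    exact ciInf_const
  haveI : Nonempty {B : Fin n → Finset (Fin n ⊕ Fin (n - 1)) //
      IsAlloc n (fun _ => 1) B} := ⟨⟨B0, hB0⟩⟩
  have hMMS : MMS n (fun _ => 1) v0 = n := by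
    unfold MMS
    apply le_antisymm
    · exact ciSup_le fun B => alloc_min_le hn B.2
    · have hbdd : BddAbove (Set.range fun B : {B : Fin n → Finset (Fin n ⊕ Fin (n - 1)) //
          IsAlloc n (fun _ => 1) B} => ⨅ j, vOf v0 (B.1 j)) := by
        refine ⟨n, ?_⟩
        rintro x ⟨B, rfl⟩
        exact alloc_min_le hn B.2
      have := le_ciSup hbdd ⟨B0, hB0⟩
      rw [hinf0] at this
      exact this
  exact ⟨hAlloc, hEF1, hlast, hMMS⟩
end

section
/- For goods with copies and leveled additive preferences, an EFX_WC exclusive allocation always exists. Moreover, the local-search algorithm that starts from any balanced exclusive allocation (bundle sizes differing by at most one) and repeatedly swaps, for an EFX_WC-envious pair (i, j), agent i's least-valued good in A_i \ A_j with her most-valued good in A_j \ A_i, terminates at an EFX_WC allocation. -/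
open Finset

variable {τ : Type*} [Fintype τ] [DecidableEq τ]

/-- Leveled preference: any larger bundle is strictly preferred. -/
def Leveled (v : τ → ℝ) : Prop :=
  ∀ S₁ S₂ : Finset τ, S₂.card < S₁.card → vOf v S₂ < vOf v S₁

private lemma sum_split {β : Type*} [AddCommMonoid β] {m : ℕ} (f : Fin m → β) (i j : Fin m)
    (hij : i ≠ j) :
    ∑ l, f l = (∑ l ∈ (univ.erase i).erase j, f l) + f j + f i := by
  rw [Finset.sum_erase_add _ _ (Finset.mem_erase.mpr ⟨hij.symm, mem_univ j⟩),
    Finset.sum_erase_add _ _ (mem_univ i)]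

/-- transfer good `g` from agent `j` to agent `i` -/
private def mov {n : ℕ} (A : Fin n → Finset τ) (i j : Fin n) (g : τ) : Fin n → Finset τ :=
  Function.update (Function.update A i (insert g (A i))) j ((A j).erase g)

private lemma mov_apply_i {n : ℕ} (A : Fin n → Finset τ) {i j : Fin n} (hij : i ≠ j) (g : τ) :
    mov A i j g i = insert g (A i) := by
  simp [mov, Function.update_of_ne hij, Function.update_self]

private lemma mov_apply_j {n : ℕ} (A : Fin n → Finset τ) {i j : Fin n} (g : τ) :
    mov A i j g j = (A j).erase g := by
  simp [mov]

private lemma mov_apply_other {n : ℕ} (A : Fin n → Finset τ) {i j l : Fin n} (hli : l ≠ i)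
    (hlj : l ≠ j) (g : τ) :
    mov A i j g l = A l := by
  simp [mov, Function.update_of_ne hli, Function.update_of_ne hlj]

private lemma isAlloc_mov {n : ℕ} {k : τ → ℕ} {A : Fin n → Finset τ} (hA : IsAlloc n k A)
    {i j : Fin n} (hij : i ≠ j) {g : τ} (hgj : g ∈ A j) (hgi : g ∉ A i) :
    IsAlloc n k (mov A i j g) := by
  intro t
  rw [← hA t, Finset.card_filter, Finset.card_filter,
    sum_split (f := fun l => if t ∈ mov A i j g l then 1 else 0) i j hij,
    sum_split (f := fun l => if t ∈ A l then 1 else 0) i j hij]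
  have hrest : ∑ l ∈ (univ.erase i).erase j, (if t ∈ mov A i j g l then 1 else 0)
      = ∑ l ∈ (univ.erase i).erase j, (if t ∈ A l then 1 else 0) := by
    refine Finset.sum_congr rfl fun l hl => ?_
    rw [mem_erase] at hl
    rw [mov_apply_other A (Finset.mem_erase.mp hl.2).1 hl.1]
  rw [hrest, mov_apply_i A hij, mov_apply_j]
  by_cases ht : t = g
  · subst ht; simp [hgi, hgj]
  · simp [Finset.mem_insert, Finset.mem_erase, ht]

/-- For goods with copies and leveled additive preferences, an
EFX_WC exclusive allocation always exists. -/
theorem efxwc_exists_leveled {n : ℕ} {k : τ → ℕ} (hn : 0 < n)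
    (hk : ∀ t, k t ≤ n) (v : Fin n → τ → ℝ) (hlev : ∀ i, Leveled (v i)) :
    ∃ A : Fin n → Finset τ, IsAlloc n k A ∧ EFXwc v A := by
  classical
  have hne : Nonempty (Fin n) := ⟨⟨0, hn⟩⟩
  -- initial allocation exists
  have hinit : IsAlloc n k (fun i : Fin n => univ.filter (fun t => (i : ℕ) < k t)) := by
    intro t
    have h1 : (univ.filter fun i : Fin n => t ∈ univ.filter (fun t' => (i : ℕ) < k t'))
        = univ.filter fun i : Fin n => (i : ℕ) < k t := by
      ext i; simp
    rw [h1]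
    have h2 : (univ.filter fun i : Fin n => (i : ℕ) < k t)
        = (Finset.range (k t)).attachFin
            (fun x hx => lt_of_lt_of_le (mem_range.mp hx) (hk t)) := by
      ext i; simp [Finset.mem_attachFin, Finset.mem_range]
    rw [h2, Finset.card_attachFin, Finset.card_range]
  -- stage 1 : minimize the sum of squared bundle sizes
  set S₁ : Finset (Fin n → Finset τ) := univ.filter (fun A => IsAlloc n k A) with hS₁def
  have hS₁ne : S₁.Nonempty := ⟨_, Finset.mem_filter.mpr ⟨mem_univ _, hinit⟩⟩
  obtain ⟨A₀, hA₀S, hmin⟩ :=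
    Finset.exists_min_image S₁ (fun A => ∑ l, (A l).card * (A l).card) hS₁ne
  have hA₀alloc : IsAlloc n k A₀ := (Finset.mem_filter.mp hA₀S).2
  set s : Fin n → ℕ := fun l => (A₀ l).card with hsdef
  -- balancedness of the size profile
  have hbal : ∀ a b : Fin n, s b ≤ s a + 1 := by
    intro a b
    by_contra hab
    push_neg at hab
    have hne' : a ≠ b := by rintro rfl; omega
    have hi1 := Finset.card_sdiff_add_card_inter (A₀ b) (A₀ a)
    have hi2 : (A₀ b ∩ A₀ a).card ≤ (A₀ a).card := card_le_card inter_subset_right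
    have hsd : 0 < (A₀ b \ A₀ a).card := by
      have hsa : (A₀ a).card = s a := rfl
      have hsb : (A₀ b).card = s b := rfl
      omega
    obtain ⟨g, hg⟩ := Finset.card_pos.mp hsd
    rw [mem_sdiff] at hg
    have halloc' : IsAlloc n k (mov A₀ a b g) := isAlloc_mov hA₀alloc hne' hg.1 hg.2
    have hmem' : mov A₀ a b g ∈ S₁ := Finset.mem_filter.mpr ⟨mem_univ _, halloc'⟩
    have hle := hmin _ hmem'
    have hlt : (∑ l, ((mov A₀ a b g) l).card * ((mov A₀ a b g) l).card)
        < ∑ l, (A₀ l).card * (A₀ l).card := by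
      rw [sum_split (f := fun l => ((mov A₀ a b g) l).card * ((mov A₀ a b g) l).card) a b hne',
        sum_split (f := fun l => (A₀ l).card * (A₀ l).card) a b hne']
      have hrest : ∑ l ∈ (univ.erase a).erase b,
          ((mov A₀ a b g) l).card * ((mov A₀ a b g) l).card
          = ∑ l ∈ (univ.erase a).erase b, (A₀ l).card * (A₀ l).card := by
        refine Finset.sum_congr rfl fun l hl => ?_
        rw [mem_erase] at hl
        rw [mov_apply_other A₀ (Finset.mem_erase.mp hl.2).1 hl.1]
      rw [hrest, mov_apply_i A₀ hne', mov_apply_j]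
      have hca : (insert g (A₀ a)).card = s a + 1 := by
        rw [Finset.card_insert_of_notMem hg.2]
      have hcb : ((A₀ b).erase g).card + 1 = s b := Finset.card_erase_add_one hg.1
      set c := ((A₀ b).erase g).card
      rw [hca]
      have h1 : s a + 1 ≤ c := by omega
      nlinarith
    omega
  -- stage 2 : among allocations with size profile s, maximize welfare of the small agents
  set q : ℕ := Finset.univ.inf' Finset.univ_nonempty s with hqdef
  set F : Finset (Fin n) := univ.filter (fun l => s l = q) with hFdef
  set S₂ : Finset (Fin n → Finset τ) := S₁.filter (fun A => ∀ l, (A l).card = s l) with hS₂def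
  have hS₂ne : S₂.Nonempty := ⟨A₀, Finset.mem_filter.mpr ⟨hA₀S, fun l => rfl⟩⟩
  obtain ⟨A, hAS, hmax⟩ :=
    Finset.exists_max_image S₂ (fun A => ∑ l ∈ F, vOf (v l) (A l)) hS₂ne
  have hAalloc : IsAlloc n k A := (Finset.mem_filter.mp (Finset.mem_filter.mp hAS).1).2
  have hAcard : ∀ l, (A l).card = s l := (Finset.mem_filter.mp hAS).2
  refine ⟨A, hAalloc, ?_⟩
  by_contra hnot
  unfold EFXwc at hnot
  push_neg at hnot
  obtain ⟨i, j, g, hg, hviol⟩ := hnot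
  have hij : i ≠ j := by
    rintro rfl
    simp at hg
  rw [mem_sdiff] at hg
  set X : Finset τ := A i \ A j with hXdef
  set Y : Finset τ := A j \ A i with hYdef
  have hgY : g ∈ Y := mem_sdiff.mpr hg
  -- card facts
  have hEg : (Y.erase g).card + 1 = Y.card := Finset.card_erase_add_one hgY
  have hXle : X.card ≤ (Y.erase g).card := by
    by_contra h
    push_neg at h
    have := hlev i X (Y.erase g) h
    -- contradiction with hviol : vOf X < vOf (Y.erase g)
    linarith
  have hiX := Finset.card_sdiff_add_card_inter (A i) (A j)
  have hiY := Finset.card_sdiff_add_card_inter (A j) (A i)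
  rw [← hXdef] at hiX
  rw [← hYdef] at hiY
  have hinter : (A i ∩ A j).card = (A j ∩ A i).card := by rw [Finset.inter_comm]
  have hsij : s j ≤ s i + 1 := hbal i j
  have hci : (A i).card = s i := hAcard i
  have hcj : (A j).card = s j := hAcard j
  have hYX : Y.card = X.card + 1 ∧ s j = s i + 1 := by
    constructor <;> omega
  -- s i is the minimum
  obtain ⟨l₀, hl₀mem, hl₀⟩ := Finset.exists_mem_eq_inf' (Finset.univ_nonempty) s
  have hqi : q ≤ s i := Finset.inf'_le s (mem_univ i)
  have hsj' : s j ≤ q + 1 := by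
    have := hbal l₀ j
    omega
  have hsiq : s i = q := by omega
  have hsjq : s j = q + 1 := by omega
  have hiF : i ∈ F := Finset.mem_filter.mpr ⟨mem_univ i, hsiq⟩
  have hjF : j ∉ F := by
    intro hjf
    have := (Finset.mem_filter.mp hjf).2
    omega
  -- X is nonempty
  have hXne : X.Nonempty := by
    rw [← Finset.card_pos]
    rcases Nat.eq_zero_or_pos X.card with h0 | h
    · exfalso
      have hX0 : X = ∅ := Finset.card_eq_zero.mp h0
      have hE0 : (Y.erase g) = ∅ := Finset.card_eq_zero.mp (by omega)
      rw [hX0, hE0] at hviol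
      exact lt_irrefl _ hviol
    · exact h
  -- there is a profitable swap pair
  have hswap : ∃ x ∈ X, ∃ g' ∈ Y, v i x < v i g' := by
    by_contra hall
    push_neg at hall
    obtain ⟨x₀, hx₀, hx₀min⟩ := Finset.exists_min_image X (v i) hXne
    have h1 : vOf (v i) (Y.erase g) ≤ (Y.erase g).card • v i x₀ := by
      refine Finset.sum_le_card_nsmul _ _ _ fun y hy => ?_
      exact hall x₀ hx₀ y (Finset.mem_of_mem_erase hy)
    have h2 : X.card • v i x₀ ≤ vOf (v i) X :=
      Finset.card_nsmul_le_sum _ _ _ fun y hy => hx₀min y hy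
    have hceq : (Y.erase g).card = X.card := by omega
    rw [hceq] at h1
    linarith
  obtain ⟨x, hxX, g', hg'Y, hvx⟩ := hswap
  have hxg' : x ≠ g' := by
    rintro rfl
    exact lt_irrefl _ hvx
  rw [mem_sdiff] at hxX hg'Y
  obtain ⟨hxAi, hxAj⟩ := hxX
  obtain ⟨hg'Aj, hg'Ai⟩ := hg'Y
  -- build the swapped allocation
  set A1 : Fin n → Finset τ := mov A j i x with hA1def
  have hA1i : A1 i = (A i).erase x := mov_apply_j A x
  have hA1j : A1 j = insert x (A j) := mov_apply_i A hij.symm x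
  have hA1other : ∀ l, l ≠ i → l ≠ j → A1 l = A l := fun l hli hlj =>
    mov_apply_other A hlj hli x
  have hA1alloc : IsAlloc n k A1 := isAlloc_mov hAalloc hij.symm hxAi hxAj
  set B : Fin n → Finset τ := mov A1 i j g' with hBdef
  have hBi : B i = insert g' ((A i).erase x) := by
    rw [hBdef, mov_apply_i A1 hij, hA1i]
  have hBj : B j = insert x ((A j).erase g') := by
    rw [hBdef, mov_apply_j, hA1j, Finset.erase_insert_of_ne hxg']
  have hBother : ∀ l, l ≠ i → l ≠ j → B l = A l := fun l hli hlj => by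
    rw [hBdef, mov_apply_other A1 hli hlj, hA1other l hli hlj]
  have hg'A1j : g' ∈ A1 j := by rw [hA1j]; exact Finset.mem_insert_of_mem hg'Aj
  have hg'A1i : g' ∉ A1 i := by
    rw [hA1i]
    exact fun h => hg'Ai (Finset.mem_of_mem_erase h)
  have hBalloc : IsAlloc n k B := isAlloc_mov hA1alloc hij hg'A1j hg'A1i
  have hg'erase : g' ∉ (A i).erase x := fun h => hg'Ai (Finset.mem_of_mem_erase h)
  have hxerase : x ∉ (A j).erase g' := fun h => hxAj (Finset.mem_of_mem_erase h)
  have hBcard : ∀ l, (B l).card = s l := by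
    intro l
    rcases eq_or_ne l i with rfl | hli
    · rw [hBi, Finset.card_insert_of_notMem hg'erase]
      have := Finset.card_erase_add_one hxAi
      omega
    rcases eq_or_ne l j with rfl | hlj
    · rw [hBj, Finset.card_insert_of_notMem hxerase]
      have := Finset.card_erase_add_one hg'Aj
      omega
    · rw [hBother l hli hlj]; exact hAcard l
  have hBS₂ : B ∈ S₂ := by
    refine Finset.mem_filter.mpr ⟨Finset.mem_filter.mpr ⟨mem_univ _, hBalloc⟩, hBcard⟩
  -- welfare strictly increases : contradiction
  have hle := hmax B hBS₂
  have hBiv : vOf (v i) (B i) = vOf (v i) (A i) - v i x + v i g' := by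
    rw [hBi]
    unfold vOf
    rw [Finset.sum_insert hg'erase]
    have := Finset.sum_erase_add (A i) (v i) hxAi
    linarith
  have hsum : ∀ C : Fin n → Finset τ, ∑ l ∈ F, vOf (v l) (C l)
      = (∑ l ∈ F.erase i, vOf (v l) (C l)) + vOf (v i) (C i) := fun C =>
    (Finset.sum_erase_add F _ hiF).symm
  have hrest : ∑ l ∈ F.erase i, vOf (v l) (B l) = ∑ l ∈ F.erase i, vOf (v l) (A l) := by
    refine Finset.sum_congr rfl fun l hl => ?_
    rw [mem_erase] at hl
    have hlj : l ≠ j := fun h => hjF (h ▸ hl.2)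
    rw [hBother l hl.1 hlj]
  rw [hsum B, hsum A, hrest, hBiv] at hle
  linarith
end

section
/- For leveled additive preferences over goods with copies, if in an exclusive allocation with bundle sizes differing by at most one some agent i EFX_WC-envies agent j, then i's bundle is strictly smaller than j's, and moreover max_{g ∈ A_j \ A_i} v_i(g) > min_{g ∈ A_i \ A_j} v_i(g). -/
open Finset

variable {τ : Type*} [Fintype τ] [DecidableEq τ]

/-- With leveled additive preferences and bundle sizes
differing by at most one, if agent i EFX_WC-envies agent j then i'"'"'s bundle
is strictly smaller, and the best good of A_j \ A_i exceeds the worst good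
of A_i \ A_j for agent i. -/
theorem leveled_envy_structure {n : ℕ} {k : τ → ℕ} {v : Fin n → τ → ℝ}
    {A : Fin n → Finset τ} (hA : IsAlloc n k A)
    (hlev : ∀ i, Leveled (v i))
    (hbal : ∀ i j, (A i).card ≤ (A j).card + 1) (i j : Fin n)
    (henvy : ∃ g ∈ A j \ A i,
      vOf (v i) (A i \ A j) < vOf (v i) ((A j \ A i).erase g)) :
    (A i).card < (A j).card ∧
    ∃ g ∈ A j \ A i, ∃ g' ∈ A i \ A j, v i g' < v i g := by
  obtain ⟨g0, hg0, hv⟩ := henvy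
  set D := A i \ A j with hD
  set E := A j \ A i with hE
  have hg0E : g0 ∈ E := hg0
  have h1 : D.card ≤ (E.erase g0).card := by
    by_contra h
    exact absurd (hlev i _ _ (lt_of_not_ge h)) (not_lt.2 hv.le)
  have hec : (E.erase g0).card = E.card - 1 := Finset.card_erase_of_mem hg0E
  have hEpos : 0 < E.card := Finset.card_pos.2 ⟨g0, hg0E⟩
  have hDE : D.card < E.card := by omega
  have hci : D.card + (A i ∩ A j).card = (A i).card := Finset.card_sdiff_add_card_inter _ _
  have hcj : E.card + (A i ∩ A j).card = (A j).card := by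
    rw [Finset.inter_comm]; exact Finset.card_sdiff_add_card_inter _ _
  have hlt : (A i).card < (A j).card := by omega
  refine ⟨hlt, ?_⟩
  have hbal' := hbal j i
  have hED : E.card ≤ D.card + 1 := by omega
  have hcard : (E.erase g0).card = D.card := by omega
  have hDne : D.Nonempty := by
    rw [← Finset.card_pos]
    by_contra h
    have hD0 : D.card = 0 := by omega
    have : D = ∅ := Finset.card_eq_zero.1 hD0
    have h2 : E.erase g0 = ∅ := Finset.card_eq_zero.1 (by omega)
    rw [this, h2] at hv
    exact lt_irrefl _ hv
  by_contra hc
  push_neg at hc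
  obtain ⟨x0, hx0, hmin⟩ := D.exists_min_image (v i) hDne
  set m := v i x0 with hm
  have hub : ∀ e ∈ E.erase g0, v i e ≤ m :=
    fun e he => hc e (Finset.mem_of_mem_erase he) x0 hx0
  have hlb : ∀ x ∈ D, m ≤ v i x := hmin
  have h2 : vOf (v i) (E.erase g0) ≤ (E.erase g0).card • m :=
    Finset.sum_le_card_nsmul _ _ _ hub
  have h3 : D.card • m ≤ vOf (v i) D :=
    Finset.card_nsmul_le_sum _ _ _ hlb
  rw [hcard] at h2
  linarith
end
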